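/- arXiv:2004.00984 — 5 statements merged into one kernel-verified Lean document; each statement's English description precedes it below -/
import Mathlib

section
/- Let J be a compact interval, 0 < μ ≤ 1/2, γ = log 2 / log(1/μ), and m ≥ 0 an integer. Let C^mid_{μ,m}(J) be the set of midpoints of the 2^m intervals of the m-th generation of the standard middle-piece Cantor construction with ratio μ on J, and set δ_m = μ^m |J|. Then for every δ ∈ (0,|J|), N(C^mid_{μ,m}(J), δ) ≤ min(δ_m^{-γ}, 2δ^{-γ}) |J|^γ, with equality N = δ_m^{-γ}|J|^γ = 2^m when δ < δ_m. -/
/-- Minimal number of closed intervals of length `δ` needed to cover `E`. -/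
noncomputable def covN (E : Set ℝ) (δ : ℝ) : ℕ :=
  sInf {n : ℕ | ∃ c : Fin n → ℝ, E ⊆ ⋃ i, Set.Icc (c i) (c i + δ)}

/-- The set of midpoints of the `2^m` intervals of the `m`-th generation of the
middle-piece Cantor construction with ratio `μ` on the interval `[a, a+L]`. -/
noncomputable def cantorMid (μ a L : ℝ) (m : ℕ) : Set ℝ :=
  {x | ∃ σ : Fin m → Bool,
    x = a + L * (∑ i : Fin m, (if σ i then (1 - μ) * μ ^ (i : ℕ) else 0)) + μ ^ m * L / 2}

open Finset

namespace CAux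

noncomputable def g (μ : ℝ) (b : ℕ → Bool) (n : ℕ) : ℝ := if b n then (1-μ)*μ^n else 0

noncomputable def ext (m : ℕ) (σ : Fin m → Bool) : ℕ → Bool :=
  fun n => if h : n < m then σ ⟨n,h⟩ else false

lemma sum_eq (μ : ℝ) (m : ℕ) (σ : Fin m → Bool) :
    (∑ i : Fin m, (if σ i then (1-μ)*μ^(i:ℕ) else 0)) = ∑ i ∈ Finset.range m, g μ (ext m σ) i := by
  rw [← Fin.sum_univ_eq_sum_range]
  refine Finset.sum_congr rfl fun i _ => ?_
  simp [g, ext, i.isLt]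

lemma g_nonneg {μ : ℝ} (hμ : 0 ≤ μ) (hμ2 : μ ≤ 1/2) (b : ℕ → Bool) (n : ℕ) : 0 ≤ g μ b n := by
  unfold g; split
  · have : 0 ≤ μ ^ n := pow_nonneg hμ n
    nlinarith
  · exact le_rfl

lemma g_le {μ : ℝ} (hμ : 0 ≤ μ) (hμ2 : μ ≤ 1/2) (b : ℕ → Bool) (n : ℕ) :
    g μ b n ≤ (1-μ)*μ^n := by
  unfold g; split
  · exact le_rfl
  · have : 0 ≤ μ ^ n := pow_nonneg hμ n
    nlinarith

lemma geom (μ : ℝ) (hμ1 : μ ≠ 1) {k m : ℕ} (h : k ≤ m) :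
    ∑ i ∈ Finset.Ico k m, (1-μ)*μ^i = μ^k - μ^m := by
  rw [← Finset.mul_sum, geom_sum_Ico hμ1 h]
  have : μ - 1 ≠ 0 := sub_ne_zero.mpr hμ1
  field_simp
  ring

lemma tail_bounds {μ : ℝ} (hμ : 0 ≤ μ) (hμ2 : μ ≤ 1/2) (b : ℕ → Bool) {k m : ℕ} (h : k ≤ m) :
    0 ≤ ∑ i ∈ Finset.Ico k m, g μ b i ∧ ∑ i ∈ Finset.Ico k m, g μ b i ≤ μ^k - μ^m := by
  constructor
  · exact Finset.sum_nonneg fun i _ => g_nonneg hμ hμ2 b i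
  · calc ∑ i ∈ Finset.Ico k m, g μ b i ≤ ∑ i ∈ Finset.Ico k m, (1-μ)*μ^i :=
        Finset.sum_le_sum fun i _ => g_le hμ hμ2 b i
      _ = μ^k - μ^m := geom μ (by linarith) h

noncomputable def mid (μ a L : ℝ) (m : ℕ) (σ : Fin m → Bool) : ℝ :=
  a + L * ∑ i ∈ Finset.range m, g μ (ext m σ) i + μ^m * L / 2

lemma mid_mem (μ a L : ℝ) (m : ℕ) (σ : Fin m → Bool) : mid μ a L m σ ∈ cantorMid μ a L m :=
  ⟨σ, by rw [sum_eq]; rfl⟩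

lemma mem_iff {μ a L : ℝ} {m : ℕ} {x : ℝ} :
    x ∈ cantorMid μ a L m ↔ ∃ σ : Fin m → Bool, x = mid μ a L m σ := by
  constructor
  · rintro ⟨σ, rfl⟩; exact ⟨σ, by rw [mid, ← sum_eq]⟩
  · rintro ⟨σ, rfl⟩; exact mid_mem μ a L m σ

noncomputable def boolEquiv (k : ℕ) : (Fin k → Bool) ≃ Fin (2^k) :=
  Fintype.equivFinOfCardEq (by simp)

/-- Upper bound: covering by `2^k` intervals at generation `k`. -/
lemma covN_le_pow {μ a L δ : ℝ} (hμ : 0 < μ) (hμ2 : μ ≤ 1/2) (hL : 0 < L)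
    {k m : ℕ} (hk : k ≤ m) (hcov : μ^k * L ≤ δ) :
    covN (cantorMid μ a L m) δ ≤ 2^k := by
  apply Nat.sInf_le
  refine ⟨fun i => a + L * ∑ j ∈ Finset.range k, g μ (ext k ((boolEquiv k).symm i)) j, ?_⟩
  rintro x hx
  obtain ⟨σ, rfl⟩ := mem_iff.mp hx
  set τ : Fin k → Bool := fun i => σ (Fin.castLE hk i) with hτ
  rw [Set.mem_iUnion]
  refine ⟨boolEquiv k τ, ?_⟩
  simp only [Equiv.symm_apply_apply]
  have hhead : ∑ j ∈ Finset.range k, g μ (ext k τ) j = ∑ j ∈ Finset.range k, g μ (ext m σ) j := by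
    refine Finset.sum_congr rfl fun j hj => ?_
    have hjk : j < k := Finset.mem_range.mp hj
    have hjm : j < m := hjk.trans_le hk
    simp [g, ext, hjk, hjm, hτ, Fin.castLE]
  have hsplit : ∑ j ∈ Finset.range m, g μ (ext m σ) j
      = ∑ j ∈ Finset.range k, g μ (ext m σ) j + ∑ j ∈ Finset.Ico k m, g μ (ext m σ) j :=
    (Finset.sum_range_add_sum_Ico _ hk).symm
  obtain ⟨hT0, hT1⟩ := tail_bounds hμ.le hμ2 (ext m σ) hk
  have hμm : (0:ℝ) ≤ μ^m := pow_nonneg hμ.le m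
  have hμk : μ^m ≤ μ^k := pow_le_pow_of_le_one hμ.le (by linarith) hk
  constructor
  · rw [mid, hhead, hsplit]; nlinarith
  · rw [mid, hhead, hsplit]; nlinarith

/-- Trivial upper bound: one interval per point. -/
lemma covN_le_pow_self {μ a L δ : ℝ} (hδ : 0 ≤ δ) (m : ℕ) :
    covN (cantorMid μ a L m) δ ≤ 2^m := by
  apply Nat.sInf_le
  refine ⟨fun i => mid μ a L m ((boolEquiv m).symm i), ?_⟩
  rintro x hx
  obtain ⟨σ, rfl⟩ := mem_iff.mp hx
  rw [Set.mem_iUnion]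
  exact ⟨boolEquiv m σ, by simp [hδ]⟩



/-- Separation: distinct midpoints are at distance at least `μ^m * L`. -/
lemma sep {μ a L : ℝ} (hμ : 0 < μ) (hμ2 : μ ≤ 1/2) (hL : 0 < L)
    {m : ℕ} {σ τ : Fin m → Bool} (hne : σ ≠ τ) :
    μ^m * L ≤ |mid μ a L m σ - mid μ a L m τ| := by
  set b1 := ext m σ with hb1
  set b2 := ext m τ with hb2
  have hex : ∃ n, b1 n ≠ b2 n := by
    obtain ⟨j, hj⟩ := Function.ne_iff.mp hne
    exact ⟨j.val, by simpa [hb1, hb2, ext, j.isLt] using hj⟩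
  set i0 := Nat.find hex with hi0def
  have hi0 : b1 i0 ≠ b2 i0 := Nat.find_spec hex
  have hmin : ∀ n < i0, b1 n = b2 n := fun n hn => not_not.mp (Nat.find_min hex hn)
  have hi0m : i0 < m := by
    by_contra h
    push_neg at h
    have h1 : b1 i0 = false := by simp [hb1, ext, Nat.not_lt.mpr h]
    have h2 : b2 i0 = false := by simp [hb2, ext, Nat.not_lt.mpr h]
    exact hi0 (h1.trans h2.symm)
  set D : ℕ → ℝ := fun n => g μ b1 n - g μ b2 n with hD
  have htot : mid μ a L m σ - mid μ a L m τ = L * ∑ n ∈ Finset.range m, D n := by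
    have hDsum : ∑ n ∈ Finset.range m, D n
        = ∑ i ∈ Finset.range m, g μ (ext m σ) i - ∑ i ∈ Finset.range m, g μ (ext m τ) i := by
      rw [hD, hb1, hb2] at *
      exact Finset.sum_sub_distrib (f := fun n => g μ (ext m σ) n) (g := fun n => g μ (ext m τ) n)
    rw [mid, mid, hDsum]
    ring
  have hsplit : ∑ n ∈ Finset.range m, D n = ∑ n ∈ Finset.Ico i0 m, D n := by
    rw [← Finset.sum_range_add_sum_Ico _ hi0m.le]
    have : ∑ n ∈ Finset.range i0, D n = 0 :=
      Finset.sum_eq_zero fun n hn => by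
        simp [hD, g, hmin n (Finset.mem_range.mp hn)]
    rw [this, zero_add]
  have hbot : ∑ n ∈ Finset.Ico i0 m, D n = D i0 + ∑ n ∈ Finset.Ico (i0+1) m, D n :=
    Finset.sum_eq_sum_Ico_succ_bot hi0m _
  have hpos : (0:ℝ) ≤ (1-μ)*μ^i0 := by
    have : (0:ℝ) ≤ μ ^ i0 := pow_nonneg hμ.le i0
    nlinarith
  have hDabs : |D i0| = (1-μ)*μ^i0 := by
    rcases Bool.eq_false_or_eq_true (b1 i0) with h1 | h1 <;>
      rcases Bool.eq_false_or_eq_true (b2 i0) with h2 | h2 <;>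
      simp [hD, g, h1, h2, abs_of_nonneg, abs_of_nonpos, hpos, neg_nonpos.mpr hpos] at hi0 ⊢
  have htail : |∑ n ∈ Finset.Ico (i0+1) m, D n| ≤ μ^(i0+1) - μ^m := by
    calc |∑ n ∈ Finset.Ico (i0+1) m, D n| ≤ ∑ n ∈ Finset.Ico (i0+1) m, |D n| :=
        Finset.abs_sum_le_sum_abs _ _
      _ ≤ ∑ n ∈ Finset.Ico (i0+1) m, (1-μ)*μ^n := by
          refine Finset.sum_le_sum fun n _ => ?_
          have h1 := g_nonneg hμ.le hμ2 b1 n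
          have h2 := g_nonneg hμ.le hμ2 b2 n
          have h3 := g_le hμ.le hμ2 b1 n
          have h4 := g_le hμ.le hμ2 b2 n
          rw [abs_sub_le_iff]
          constructor <;> [linarith; linarith]
      _ = μ^(i0+1) - μ^m := geom μ (by linarith) hi0m
  have hsum_lb : μ^m ≤ |∑ n ∈ Finset.range m, D n| := by
    have h1 : |D i0| ≤ |∑ n ∈ Finset.Ico i0 m, D n| + |∑ n ∈ Finset.Ico (i0+1) m, D n| := by
      calc |D i0| = |(∑ n ∈ Finset.Ico i0 m, D n) - ∑ n ∈ Finset.Ico (i0+1) m, D n| := by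
            rw [hbot]; ring_nf
        _ ≤ _ := abs_sub _ _
    have hμi : (0:ℝ) ≤ μ ^ i0 := pow_nonneg hμ.le i0
    rw [hsplit]
    have : μ^(i0+1) = μ * μ^i0 := by ring
    nlinarith [hDabs, htail]
  rw [htot, abs_mul, abs_of_pos hL]
  nlinarith

/-- Lower bound when `δ < μ^m * L`. -/
lemma lower {μ a L δ : ℝ} (hμ : 0 < μ) (hμ2 : μ ≤ 1/2) (hL : 0 < L) (hδ0 : 0 ≤ δ)
    {m : ℕ} (hlt : δ < μ^m * L) :
    2^m ≤ covN (cantorMid μ a L m) δ := by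
  have hne : {n : ℕ | ∃ c : Fin n → ℝ, cantorMid μ a L m ⊆ ⋃ i, Set.Icc (c i) (c i + δ)}.Nonempty := by
    refine ⟨2^m, fun i => mid μ a L m ((boolEquiv m).symm i), ?_⟩
    rintro x hx
    obtain ⟨σ, rfl⟩ := mem_iff.mp hx
    rw [Set.mem_iUnion]
    exact ⟨boolEquiv m σ, by simp [hδ0]⟩
  obtain ⟨c, hc⟩ := Nat.sInf_mem hne
  have hch : ∀ σ : Fin m → Bool, ∃ i, mid μ a L m σ ∈ Set.Icc (c i) (c i + δ) := fun σ =>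
    Set.mem_iUnion.mp (hc (mid_mem μ a L m σ))
  choose F hF using hch
  have hinj : Function.Injective F := by
    intro σ τ h
    by_contra hne'
    have hs := sep hμ hμ2 hL hne' (a := a)
    obtain ⟨h1, h2⟩ := hF σ
    obtain ⟨h3, h4⟩ := hF τ
    rw [h] at h1 h2
    have : |mid μ a L m σ - mid μ a L m τ| ≤ δ := by
      rw [abs_sub_le_iff]; constructor <;> linarith
    linarith
  have := Fintype.card_le_of_injective F hinj
  simpa [covN] using this

end CAux

namespace CAux

lemma rpow_key {μ L γ : ℝ} (hμ : 0 < μ) (hμ2 : μ ≤ 1/2) (hL : 0 < L)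
    (hγ : γ = Real.log 2 / Real.log (1/μ)) (m : ℕ) :
    (μ^m * L) ^ (-γ) * L ^ γ = 2^m := by
  have h1μ : 1 < 1/μ := one_lt_one_div hμ (by linarith)
  have hlog : 0 < Real.log (1/μ) := Real.log_pos h1μ
  have hbase : μ ^ (-γ) = 2 := by
    calc μ^(-γ) = (1/μ)^γ := by
          rw [one_div, Real.inv_rpow hμ.le, ← Real.rpow_neg hμ.le]
      _ = Real.exp (Real.log (1/μ) * γ) := Real.rpow_def_of_pos (by positivity) γ
      _ = Real.exp (Real.log 2) := by rw [hγ, mul_div_cancel₀ _ hlog.ne']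
      _ = 2 := Real.exp_log two_pos
  have h1 : (μ^m * L)^(-γ) = (μ^m)^(-γ) * L^(-γ) := Real.mul_rpow (by positivity) hL.le
  have h2 : ((μ:ℝ)^m)^(-γ) = 2^m := by
    rw [← Real.rpow_natCast μ m, ← Real.rpow_mul hμ.le, mul_comm,
      Real.rpow_mul hμ.le, hbase, Real.rpow_natCast]
  rw [h1, h2, mul_assoc, ← Real.rpow_add hL, neg_add_cancel, Real.rpow_zero, mul_one]

lemma rpow_anti {γ x y : ℝ} (hγ : 0 < γ) (hx : 0 < x) (hxy : x ≤ y) :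
    y ^ (-γ) ≤ x ^ (-γ) := by
  rw [Real.rpow_neg hx.le, Real.rpow_neg (hx.trans_le hxy).le]
  exact inv_anti₀ (Real.rpow_pos_of_pos hx γ) (Real.rpow_le_rpow hx.le hxy hγ.le)

end CAux

/-- Covering-number bound for the midpoint set: for `δ ∈ (0,|J|)`,
`N(C^mid_{μ,m}(J), δ) ≤ min(δ_m^{-γ}, 2 δ^{-γ}) |J|^γ`, with equality
`N = δ_m^{-γ} |J|^γ = 2^m` when `δ < δ_m`, where `δ_m = μ^m |J|` and
`γ = log 2 / log (1/μ)`. -/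
theorem stmt4 (μ : ℝ) (hμ : 0 < μ) (hμ2 : μ ≤ 1/2) (a L : ℝ) (hL : 0 < L) (m : ℕ)
    (γ : ℝ) (hγ : γ = Real.log 2 / Real.log (1/μ))
    (δ : ℝ) (hδ : 0 < δ) (hδL : δ < L) :
    (covN (cantorMid μ a L m) δ : ℝ) ≤ min ((μ ^ m * L) ^ (-γ)) (2 * δ ^ (-γ)) * L ^ γ ∧
    (δ < μ ^ m * L →
      (covN (cantorMid μ a L m) δ : ℝ) = (μ ^ m * L) ^ (-γ) * L ^ γ ∧
      (covN (cantorMid μ a L m) δ : ℝ) = 2 ^ m) := by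
  have hγpos : 0 < γ := by
    rw [hγ]
    exact div_pos (Real.log_pos one_lt_two) (Real.log_pos (one_lt_one_div hμ (by linarith)))
  have key : ∀ j : ℕ, (μ^j * L) ^ (-γ) * L ^ γ = 2^j := CAux.rpow_key hμ hμ2 hL hγ
  have hLγ : (0:ℝ) ≤ L ^ γ := Real.rpow_nonneg hL.le γ
  have hmin : ∀ A B : ℝ, min A B * L ^ γ = min (A * L ^ γ) (B * L ^ γ) := fun A B =>
    min_mul_of_nonneg A B hLγ
  have hk0 : L ^ (-γ) * L ^ γ = 1 := by simpa using key 0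
  have heqcase : δ < μ ^ m * L → (covN (cantorMid μ a L m) δ : ℝ) = 2 ^ m := by
    intro hlt
    have hup := CAux.covN_le_pow_self (μ := μ) (a := a) (L := L) hδ.le m
    have hlo := CAux.lower hμ hμ2 hL hδ.le hlt (a := a)
    have : covN (cantorMid μ a L m) δ = 2 ^ m := le_antisymm hup hlo
    rw [this]
    push_cast
    ring
  constructor
  · rw [hmin]
    rcases lt_or_ge δ (μ ^ m * L) with hlt | hge
    · rw [heqcase hlt]
      refine le_min (le_of_eq (key m).symm) ?_
      have h1 : (μ^m * L) ^ (-γ) ≤ δ ^ (-γ) := CAux.rpow_anti hγpos hδ hlt.le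
      have h2 : (μ^m * L) ^ (-γ) * L ^ γ ≤ δ ^ (-γ) * L ^ γ :=
        mul_le_mul_of_nonneg_right h1 hLγ
      rw [key m] at h2
      have h3 : (0:ℝ) ≤ δ ^ (-γ) * L ^ γ := by positivity
      calc ((2:ℝ)^m) ≤ δ ^ (-γ) * L ^ γ := h2
        _ ≤ 2 * δ ^ (-γ) * L ^ γ := by linarith
        _ = 2 * δ ^ (-γ) * L ^ γ := rfl
    · have hex : ∃ k, μ ^ k * L ≤ δ := ⟨m, hge⟩
      have hkm : Nat.find hex ≤ m := Nat.find_le hge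
      have hkδ : μ ^ Nat.find hex * L ≤ δ := Nat.find_spec hex
      have hup := CAux.covN_le_pow hμ hμ2 hL hkm hkδ (a := a)
      have hup' : (covN (cantorMid μ a L m) δ : ℝ) ≤ 2 ^ Nat.find hex := by exact_mod_cast hup
      refine hup'.trans (le_min ?_ ?_)
      · rw [key m]
        exact_mod_cast pow_le_pow_right₀ one_le_two hkm
      · rcases Nat.eq_zero_or_eq_succ_pred (Nat.find hex) with h0 | hsucc
        · rw [h0]
          have h1 : L ^ (-γ) ≤ δ ^ (-γ) := CAux.rpow_anti hγpos hδ hδL.le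
          have h2 : L ^ (-γ) * L ^ γ ≤ δ ^ (-γ) * L ^ γ := mul_le_mul_of_nonneg_right h1 hLγ
          rw [hk0] at h2
          have h3 : (0:ℝ) ≤ δ ^ (-γ) * L ^ γ := by positivity
          calc ((2:ℝ)^(0:ℕ)) = 1 := by norm_num
            _ ≤ 2 * δ ^ (-γ) * L ^ γ := by nlinarith
        · set j := (Nat.find hex) - 1 with hj
          have hkj : Nat.find hex = j + 1 := hsucc
          have hjlt : ¬ μ ^ j * L ≤ δ := Nat.find_min hex (by omega)
          push_neg at hjlt
          have h1 : (μ^j * L) ^ (-γ) ≤ δ ^ (-γ) := CAux.rpow_anti hγpos hδ hjlt.le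
          have h2 : (μ^j * L) ^ (-γ) * L ^ γ ≤ δ ^ (-γ) * L ^ γ :=
            mul_le_mul_of_nonneg_right h1 hLγ
          rw [key j] at h2
          rw [hkj]
          calc ((2:ℝ) ^ (j+1)) = 2 * 2 ^ j := by ring
            _ ≤ 2 * (δ ^ (-γ) * L ^ γ) := by linarith
            _ = 2 * δ ^ (-γ) * L ^ γ := by ring
  · intro hlt
    exact ⟨by rw [heqcase hlt, key m], heqcase hlt⟩
end

section
/- Let J, μ, γ, m, δ_m, and C^mid_{μ,m}(J) be as in the midpoint Cantor construction. Then for every open subinterval I ⊆ J and every δ ∈ (0,|I|): N(C^mid_{μ,m}(J) ∩ I, δ) ≤ 8 δ^{-γ}|I|^γ if δ_m ≤ δ ≤ |I|; N(C^mid_{μ,m}(J) ∩ I, δ) ≤ 4 δ_m^{-γ}|I|^γ if δ ≤ δ_m ≤ |I|; and N(C^mid_{μ,m}(J) ∩ I, δ) ≤ 1 if |I| < δ_m. -/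
namespace CantorAux

noncomputable def cf (μ : ℝ) (k : ℕ) (σ : Fin k → Bool) : ℝ :=
  ∑ i : Fin k, (if σ i then (1 - μ) * μ ^ (i : ℕ) else 0)

lemma geom (μ : ℝ) : ∀ k : ℕ, ∑ i ∈ Finset.range k, (1 - μ) * μ ^ i = 1 - μ ^ k
  | 0 => by simp
  | (k+1) => by rw [Finset.sum_range_succ, geom μ k]; ring

lemma cf_nonneg {μ : ℝ} (h0 : 0 ≤ μ) (h1 : μ ≤ 1) (k : ℕ) (σ : Fin k → Bool) :
    0 ≤ cf μ k σ := by
  apply Finset.sum_nonneg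
  intro i _
  split
  · exact mul_nonneg (by linarith) (pow_nonneg h0 _)
  · exact le_refl 0

lemma cf_le {μ : ℝ} (h0 : 0 ≤ μ) (h1 : μ ≤ 1) (k : ℕ) (σ : Fin k → Bool) :
    cf μ k σ ≤ 1 - μ ^ k := by
  have : cf μ k σ ≤ ∑ i : Fin k, (1 - μ) * μ ^ (i : ℕ) := by
    apply Finset.sum_le_sum
    intro i _
    split
    · exact le_refl _
    · exact mul_nonneg (by linarith) (pow_nonneg h0 _)
  refine this.trans ?_
  rw [Fin.sum_univ_eq_sum_range (fun i => (1 - μ) * μ ^ i) k, geom]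

lemma cf_succ (μ : ℝ) (k : ℕ) (σ : Fin (k+1) → Bool) :
    cf μ (k+1) σ = (if σ 0 then 1 - μ else 0) + μ * cf μ k (fun i => σ i.succ) := by
  unfold cf
  rw [Fin.sum_univ_succ, Finset.mul_sum]
  simp only [Fin.val_zero, pow_zero, mul_one, Fin.val_succ]
  congr 1
  refine Finset.sum_congr rfl fun i _ => ?_
  split <;> ring

lemma cf_sep {μ : ℝ} (hμ : 0 < μ) (hμ2 : μ ≤ 1/2) :
    ∀ k (σ τ : Fin k → Bool), σ ≠ τ → μ ^ k ≤ |cf μ k σ - cf μ k τ|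
  | 0, σ, τ, h => absurd (funext fun i => i.elim0) h
  | (k+1), σ, τ, h => by
    have h1 : μ ≤ 1 := hμ2.trans (by norm_num)
    rw [cf_succ, cf_succ]
    have hd1 := cf_nonneg hμ.le h1 k (fun i => σ i.succ)
    have hd2 := cf_nonneg hμ.le h1 k (fun i => τ i.succ)
    have hu1 := cf_le hμ.le h1 k (fun i => σ i.succ)
    have hu2 := cf_le hμ.le h1 k (fun i => τ i.succ)
    have hpk : (0:ℝ) ≤ μ ^ k := by positivity
    have key : ∀ (A B : ℝ), 0 ≤ A → A ≤ 1 - μ ^ k → 0 ≤ B → B ≤ 1 - μ ^ k →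
        μ ^ (k+1) ≤ |(1 - μ) + μ * A - (0 + μ * B)| := by
      intro A B hA hA' hB hB'
      have h2 : μ * B ≤ μ * (1 - μ ^ k) := mul_le_mul_of_nonneg_left hB' hμ.le
      have h3 : 0 ≤ μ * A := mul_nonneg hμ.le hA
      have hh : μ ^ (k+1) ≤ (1 - μ) + μ * A - (0 + μ * B) := by
        have he : μ ^ (k+1) = μ * μ ^ k := by ring
        nlinarith
      exact hh.trans (le_abs_self _)
    by_cases h0 : σ 0 = τ 0
    · have htails : (fun i : Fin k => σ i.succ) ≠ (fun i : Fin k => τ i.succ) := by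
        intro he
        apply h
        funext i
        refine Fin.cases h0 (fun j => ?_) i
        exact congrFun he j
      have hrec := cf_sep hμ hμ2 k _ _ htails
      rw [h0]
      calc μ ^ (k+1) = μ * μ ^ k := by ring
        _ ≤ μ * |cf μ k (fun i => σ i.succ) - cf μ k (fun i => τ i.succ)| :=
            mul_le_mul_of_nonneg_left hrec hμ.le
        _ = |(if τ 0 then 1-μ else 0) + μ * cf μ k (fun i => σ i.succ) -
              ((if τ 0 then 1-μ else 0) + μ * cf μ k (fun i => τ i.succ))| := by
            rw [show (if τ 0 then 1-μ else 0) + μ * cf μ k (fun i => σ i.succ) -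
              ((if τ 0 then 1-μ else 0) + μ * cf μ k (fun i => τ i.succ)) =
              μ * (cf μ k (fun i => σ i.succ) - cf μ k (fun i => τ i.succ)) by ring,
              abs_mul, abs_of_pos hμ]
    · cases hσ0 : σ 0 <;> cases hτ0 : τ 0
      · exact absurd (hσ0.trans hτ0.symm) h0
      · simp only [hσ0, hτ0, Bool.false_eq_true, if_false, if_true]
        rw [abs_sub_comm]
        exact key _ _ hd2 hu2 hd1 hu1
      · simp only [hσ0, hτ0, Bool.false_eq_true, if_false, if_true]
        exact key _ _ hd1 hu1 hd2 hu2
      · exact absurd (hσ0.trans hτ0.symm) h0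

lemma cf_castSucc (μ : ℝ) (k : ℕ) (σ : Fin (k+1) → Bool) :
    cf μ (k+1) σ = cf μ k (fun i => σ i.castSucc) +
      (if σ (Fin.last k) then (1 - μ) * μ ^ k else 0) := by
  unfold cf
  rw [Fin.sum_univ_castSucc]
  simp [Fin.coe_castSucc]

lemma cf_restrict {μ : ℝ} (h0 : 0 ≤ μ) (h1 : μ ≤ 1) :
    ∀ m k (h : k ≤ m) (σ : Fin m → Bool),
      cf μ k (fun i => σ (Fin.castLE h i)) ≤ cf μ m σ ∧
      cf μ m σ ≤ cf μ k (fun i => σ (Fin.castLE h i)) + (μ ^ k - μ ^ m)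
  | 0, k, h, σ => by
    interval_cases k
    have he : (fun i => σ (Fin.castLE h i)) = σ := by
      funext i; exact congrArg σ (Fin.ext rfl)
    rw [he]
    constructor <;> simp
  | (m+1), k, h, σ => by
    rcases Nat.eq_or_lt_of_le h with he | hlt
    · subst he
      have he : (fun i => σ (Fin.castLE h i)) = σ := by
        funext i; exact congrArg σ (Fin.ext rfl)
      rw [he]
      constructor <;> simp
    · have hkm : k ≤ m := Nat.lt_succ_iff.mp hlt
      obtain ⟨ih1, ih2⟩ := cf_restrict h0 h1 m k hkm (fun i => σ i.castSucc)
      have hcomp : (fun i => (fun j => σ j.castSucc) (Fin.castLE hkm i))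
          = (fun i => σ (Fin.castLE h i)) := by
        funext i; exact congrArg σ (Fin.ext rfl)
      rw [hcomp] at ih1 ih2
      rw [cf_castSucc]
      have hn : (0:ℝ) ≤ (1 - μ) * μ ^ m := mul_nonneg (by linarith) (pow_nonneg h0 _)
      have htail0 : (0:ℝ) ≤ (if σ (Fin.last m) then (1 - μ) * μ ^ m else 0) := by
        split
        · exact hn
        · exact le_refl 0
      have htail1 : (if σ (Fin.last m) then (1 - μ) * μ ^ m else 0) ≤ (1 - μ) * μ ^ m := by
        split
        · exact le_refl _
        · exact hn
      constructor
      · linarith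
      · have : μ ^ (m+1) = μ * μ ^ m := by ring
        nlinarith


lemma covN_le_card (E : Set ℝ) (δ : ℝ) (t : Finset ℝ)
    (h : E ⊆ ⋃ c ∈ t, Set.Icc c (c + δ)) : covN E δ ≤ t.card := by
  apply Nat.sInf_le
  refine ⟨fun i => (t.equivFin.symm i : ℝ), ?_⟩
  intro e he
  obtain ⟨c, hc, hce⟩ := Set.mem_iUnion₂.mp (h he)
  refine Set.mem_iUnion.mpr ⟨t.equivFin ⟨c, hc⟩, ?_⟩
  simpa using hce

lemma card_window {μ : ℝ} (hμ : 0 < μ) (hμ2 : μ ≤ 1/2) (a L : ℝ) (hL : 0 < L)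
    (k : ℕ) (u v : ℝ) (hv : v - u < 2 * (μ ^ k * L)) :
    ((Finset.univ : Finset (Fin k → Bool)).filter
      (fun σ => a + L * cf μ k σ ∈ Set.Icc u v)).card ≤ 2 := by
  classical
  have h2 : ((Finset.univ : Finset Bool)).card = 2 := by simp
  rw [← h2]
  apply Finset.card_le_card_of_injOn (fun σ => decide (a + L * cf μ k σ < u + μ ^ k * L))
  · intro σ _; exact Finset.mem_univ _
  · intro σ hσ τ hτ hd
    simp only [Finset.coe_filter, Set.mem_setOf_eq, Finset.mem_univ, true_and,
      Set.mem_Icc] at hσ hτ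
    by_contra hne
    have hsep := cf_sep hμ hμ2 k σ τ hne
    have hsepL : μ ^ k * L ≤ |(a + L * cf μ k σ) - (a + L * cf μ k τ)| := by
      rw [show (a + L * cf μ k σ) - (a + L * cf μ k τ) = L * (cf μ k σ - cf μ k τ) by ring,
        abs_mul, abs_of_pos hL]
      calc μ ^ k * L = L * μ ^ k := by ring
        _ ≤ L * |cf μ k σ - cf μ k τ| := mul_le_mul_of_nonneg_left hsep hL.le
    rw [decide_eq_decide] at hd
    obtain ⟨hσ1, hσ2⟩ := hσ
    obtain ⟨hτ1, hτ2⟩ := hτ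
    rcases lt_or_ge (a + L * cf μ k σ) (u + μ ^ k * L) with hc1 | hc1
    · have hc2 := hd.mp hc1
      have habs : |(a + L * cf μ k σ) - (a + L * cf μ k τ)| < μ ^ k * L :=
        abs_sub_lt_iff.mpr ⟨by linarith, by linarith⟩
      linarith
    · have hc2 : u + μ ^ k * L ≤ a + L * cf μ k τ := by
        by_contra hh
        exact absurd (hd.mpr (not_le.mp hh)) (not_lt.mpr hc1)
      have habs : |(a + L * cf μ k σ) - (a + L * cf μ k τ)| < μ ^ k * L :=
        abs_sub_lt_iff.mpr ⟨by linarith, by linarith⟩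
      linarith

lemma card_fiber (j k : ℕ) (h : j ≤ k) (τ : Fin j → Bool) :
    ((Finset.univ : Finset (Fin k → Bool)).filter
      (fun σ => (fun i => σ (Fin.castLE h i)) = τ)).card ≤ 2 ^ (k - j) := by
  classical
  have h2 : ((Finset.univ : Finset (Fin (k-j) → Bool))).card = 2 ^ (k - j) := by simp
  rw [← h2]
  apply Finset.card_le_card_of_injOn
      (fun σ (i : Fin (k-j)) => σ ⟨j + i.val, by omega⟩)
  · intro σ _; exact Finset.mem_univ _
  · intro σ hσ τ' hτ' hd
    simp only [Finset.coe_filter, Finset.mem_univ, true_and, Set.mem_setOf_eq] at hσ hτ'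
    funext i
    by_cases hij : i.val < j
    · have e1 := congrFun hσ ⟨i.val, hij⟩
      have e2 := congrFun hτ' ⟨i.val, hij⟩
      have hcast : Fin.castLE h ⟨i.val, hij⟩ = i := Fin.ext rfl
      rw [hcast] at e1 e2
      rw [e1, e2]
    · have e := congrFun hd ⟨i.val - j, by omega⟩
      simp only at e
      have hcast : (⟨j + (i.val - j), by omega⟩ : Fin k) = i := by
        apply Fin.ext
        show j + (i.val - j) = i.val
        omega
      rw [hcast] at e
      exact e

lemma card_filter_le_of_restrict {j k : ℕ} (h : j ≤ k)
    (P : (Fin k → Bool) → Prop) (Q : (Fin j → Bool) → Prop)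
    [DecidablePred P] [DecidablePred Q]
    (hPQ : ∀ σ, P σ → Q (fun i => σ (Fin.castLE h i))) (n : ℕ)
    (hQ : (Finset.univ.filter Q).card ≤ n) :
    (Finset.univ.filter P).card ≤ 2 ^ (k - j) * n := by
  classical
  have hmain := Finset.card_le_mul_card_image
    (f := fun (σ : Fin k → Bool) => fun i => σ (Fin.castLE h i))
    (Finset.univ.filter P) (2 ^ (k - j)) ?_
  · refine hmain.trans ?_
    refine Nat.mul_le_mul (le_refl _) ?_
    calc ((Finset.univ.filter P).image _).card ≤ (Finset.univ.filter Q).card := by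
          apply Finset.card_le_card
          intro b hb
          obtain ⟨σ, hσ, rfl⟩ := Finset.mem_image.mp hb
          exact Finset.mem_filter.mpr ⟨Finset.mem_univ _, hPQ σ (Finset.mem_filter.mp hσ).2⟩
      _ ≤ n := hQ
  · intro b _
    calc ((Finset.univ.filter P).filter
          (fun σ => (fun i => σ (Fin.castLE h i)) = b)).card
        ≤ ((Finset.univ : Finset (Fin k → Bool)).filter
          (fun σ => (fun i => σ (Fin.castLE h i)) = b)).card := by
          apply Finset.card_le_card
          intro σ hσ
          simp only [Finset.mem_filter, Finset.mem_univ, true_and] at hσ ⊢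
          exact hσ.2
      _ ≤ 2 ^ (k - j) := card_fiber j k h b


lemma mem_cantorMid {μ a L p : ℝ} {m : ℕ} :
    p ∈ cantorMid μ a L m ↔
      ∃ σ : Fin m → Bool, p = a + L * cf μ m σ + μ ^ m * L / 2 := Iff.rfl

lemma rpow_base {μ : ℝ} (hμ : 0 < μ) (hμ2 : μ ≤ 1/2) (γ : ℝ)
    (hγ : γ = Real.log 2 / Real.log (1/μ)) :
    0 ≤ γ ∧ ∀ n : ℕ, ((1/μ : ℝ) ^ n) ^ γ = 2 ^ n := by
  have hμ1 : μ < 1 := lt_of_le_of_lt hμ2 (by norm_num)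
  have h1μ : 1 < 1/μ := by rw [lt_div_iff₀ hμ]; linarith
  have hlog : 0 < Real.log (1/μ) := Real.log_pos h1μ
  have hγ0 : 0 ≤ γ := by
    rw [hγ]
    exact div_nonneg (Real.log_nonneg one_le_two) hlog.le
  have hpos : (0:ℝ) < 1/μ := by positivity
  have hbase : (1/μ : ℝ) ^ γ = 2 := by
    rw [Real.rpow_def_of_pos hpos, hγ]
    rw [show Real.log (1/μ) * (Real.log 2 / Real.log (1/μ)) = Real.log 2 by
      field_simp]
    exact Real.exp_log two_pos
  refine ⟨hγ0, fun n => ?_⟩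
  rw [← Real.rpow_natCast (1/μ) n, ← Real.rpow_mul hpos.le, mul_comm,
    Real.rpow_mul hpos.le, hbase, Real.rpow_natCast]

lemma two_pow_le {μ γ L ℓ δ : ℝ} (hμ : 0 < μ) (hμ2 : μ ≤ 1/2)
    (hγ : γ = Real.log 2 / Real.log (1/μ)) (hδ : 0 < δ) {n e N : ℕ}
    (hN : N = n + e) (h1 : δ ≤ μ ^ N * L) (h2 : μ ^ e * L ≤ ℓ) :
    (2:ℝ) ^ n ≤ (ℓ/δ) ^ γ := by
  have h0 : (1/μ:ℝ) ^ n ≤ ℓ/δ := by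
    rw [one_div, inv_pow, le_div_iff₀ hδ, inv_mul_eq_div, div_le_iff₀ (pow_pos hμ n)]
    calc δ ≤ μ ^ N * L := h1
      _ = μ ^ n * (μ ^ e * L) := by rw [hN, pow_add]; ring
      _ ≤ μ ^ n * ℓ := mul_le_mul_of_nonneg_left h2 (by positivity)
      _ = ℓ * μ ^ n := by ring
  obtain ⟨hγ0, hpow⟩ := rpow_base hμ hμ2 γ hγ
  rw [← hpow n]
  exact Real.rpow_le_rpow (by positivity) h0 hγ0

end CantorAux


set_option maxHeartbeats 1000000 in
open CantorAux in
/-- Localized covering-number bounds for the midpoint Cantor set: for every open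
subinterval `I = (x,y) ⊆ J = [a, a+L]` and every `δ ∈ (0,|I|)`, with `δ_m = μ^m L` and
`γ = log 2 / log(1/μ)`:
`N ≤ 8 δ^{-γ} |I|^γ` if `δ_m ≤ δ ≤ |I|`; `N ≤ 4 δ_m^{-γ} |I|^γ` if `δ ≤ δ_m ≤ |I|`;
and `N ≤ 1` if `|I| < δ_m`. -/
theorem stmt5 (μ : ℝ) (hμ : 0 < μ) (hμ2 : μ ≤ 1/2) (a L : ℝ) (hL : 0 < L) (m : ℕ)
    (γ : ℝ) (hγ : γ = Real.log 2 / Real.log (1/μ))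
    (x y : ℝ) (hx : a ≤ x) (hy : y ≤ a + L)
    (δ : ℝ) (hδ : 0 < δ) (hδI : δ < y - x) :
    (μ ^ m * L ≤ δ →
      (covN (cantorMid μ a L m ∩ Set.Ioo x y) δ : ℝ) ≤ 8 * δ ^ (-γ) * (y - x) ^ γ) ∧
    (δ ≤ μ ^ m * L → μ ^ m * L ≤ y - x →
      (covN (cantorMid μ a L m ∩ Set.Ioo x y) δ : ℝ) ≤ 4 * (μ ^ m * L) ^ (-γ) * (y - x) ^ γ) ∧
    (y - x < μ ^ m * L →
      covN (cantorMid μ a L m ∩ Set.Ioo x y) δ ≤ 1) := by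
  classical
  have h1μ : μ ≤ 1 := hμ2.trans (by norm_num)
  have hxy : x < y := by linarith
  have hℓL : y - x ≤ L := by linarith
  have hℓ0 : 0 < y - x := by linarith
  obtain ⟨hγ0, hpow2⟩ := rpow_base hμ hμ2 γ hγ
  set mid : (Fin m → Bool) → ℝ :=
    fun σ => a + L * cf μ m σ + μ ^ m * L / 2 with hmiddef
  have hmem : ∀ p, p ∈ cantorMid μ a L m ↔ ∃ σ, p = mid σ := fun p => mem_cantorMid
  -- sandwich: each midpoint lies in its generation-k interval
  have hsand : ∀ (k : ℕ) (hk : k ≤ m) (σ : Fin m → Bool),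
      a + L * cf μ k (fun i => σ (Fin.castLE hk i)) ≤ mid σ ∧
      mid σ ≤ a + L * cf μ k (fun i => σ (Fin.castLE hk i)) + μ ^ k * L := by
    intro k hk σ
    obtain ⟨l1, l2⟩ := cf_restrict hμ.le h1μ m k hk σ
    have hm1 := mul_le_mul_of_nonneg_left l1 hL.le
    have hm2 := mul_le_mul_of_nonneg_left l2 hL.le
    have hmm : (0:ℝ) ≤ μ ^ m * L := by positivity
    have hkk : (0:ℝ) ≤ μ ^ k * L := by positivity
    constructor
    · show _ ≤ a + L * cf μ m σ + μ ^ m * L / 2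
      nlinarith
    · show a + L * cf μ m σ + μ ^ m * L / 2 ≤ _
      nlinarith
  -- separation of midpoints
  have hmidsep : ∀ σ τ : Fin m → Bool, σ ≠ τ → μ ^ m * L ≤ |mid σ - mid τ| := by
    intro σ τ hne
    have hsep := cf_sep hμ hμ2 m σ τ hne
    have he : |mid σ - mid τ| = L * |cf μ m σ - cf μ m τ| := by
      rw [show mid σ - mid τ = L * (cf μ m σ - cf μ m τ) by simp only [hmiddef]; ring,
        abs_mul, abs_of_pos hL]
    rw [he]
    calc μ ^ m * L = L * μ ^ m := by ring
      _ ≤ L * |cf μ m σ - cf μ m τ| := mul_le_mul_of_nonneg_left hsep hL.le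
  refine ⟨?_, ?_, ?_⟩
  · -- Part 1 : δ_m ≤ δ
    intro hδm
    have hkex : ∃ n, μ ^ n * L ≤ δ := ⟨m, hδm⟩
    set k := Nat.find hkex with hkdef
    have hk : μ ^ k * L ≤ δ := Nat.find_spec hkex
    have hkm : k ≤ m := Nat.find_min' hkex hδm
    have hk0 : 0 < k := by
      rcases Nat.eq_zero_or_pos k with h0 | h0
      · exfalso
        rw [h0] at hk
        simp only [pow_zero, one_mul] at hk
        linarith
      · exact h0
    have hk1 : δ < μ ^ (k-1) * L := by
      have := Nat.find_min hkex (show k - 1 < k by omega)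
      exact not_le.mp this
    have hjex : ∃ n, μ ^ n * L ≤ y - x := ⟨k, by linarith⟩
    set j := Nat.find hjex with hjdef
    have hj : μ ^ j * L ≤ y - x := Nat.find_spec hjex
    have hjk : j ≤ k := Nat.find_min' hjex (by linarith)
    -- the covering family at level k
    set P : (Fin k → Bool) → Prop :=
      fun σ => a + L * cf μ k σ < y ∧ x < a + L * cf μ k σ + μ ^ k * L with hPdef
    set Pk := Finset.univ.filter P with hPk
    set t := Pk.image (fun σ => a + L * cf μ k σ) with ht
    have hcov : cantorMid μ a L m ∩ Set.Ioo x y ⊆ ⋃ c ∈ t, Set.Icc c (c + δ) := by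
      intro p hp
      obtain ⟨σ, rfl⟩ := (hmem p).mp hp.1
      obtain ⟨hpx, hpy⟩ := hp.2
      obtain ⟨hs1, hs2⟩ := hsand k hkm σ
      set ρ := fun i => σ (Fin.castLE hkm i) with hρ
      have hρP : P ρ := ⟨by linarith, by linarith⟩
      have hct : a + L * cf μ k ρ ∈ t := by
        rw [ht]
        exact Finset.mem_image_of_mem _ (Finset.mem_filter.mpr ⟨Finset.mem_univ _, hρP⟩)
      refine Set.mem_biUnion hct ?_
      exact Set.mem_Icc.mpr ⟨hs1, by linarith⟩
    have hcovN : covN (cantorMid μ a L m ∩ Set.Ioo x y) δ ≤ Pk.card :=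
      le_trans (covN_le_card _ _ t hcov) (Finset.card_image_le)
    -- count Pk
    have hcount : (Pk.card : ℝ) ≤ 4 * 2 ^ (k - j) := by
      rcases Nat.eq_zero_or_pos j with hj0 | hj1
      · -- trivial bound by total number of codes
        have h1 : Pk.card ≤ 2 ^ k := by
          calc Pk.card ≤ (Finset.univ : Finset (Fin k → Bool)).card :=
                Finset.card_filter_le _ _
            _ = 2 ^ k := by simp
        have : (Pk.card : ℝ) ≤ 2 ^ k := by exact_mod_cast h1
        rw [hj0]
        refine this.trans ?_
        have : (2:ℝ) ^ k ≤ 4 * 2 ^ k := by nlinarith [pow_pos (by norm_num : (0:ℝ) < 2) k]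
        simpa using this
      · -- parents at level j - 1
        have hjp : j - 1 ≤ k := by omega
        have hwin : y - x < μ ^ (j-1) * L := by
          have := Nat.find_min hjex (show j - 1 < j by omega)
          exact not_le.mp this
        set Q : (Fin (j-1) → Bool) → Prop :=
          fun τ => a + L * cf μ (j-1) τ ∈ Set.Icc (x - μ ^ (j-1) * L) y with hQdef
        have hQcard : (Finset.univ.filter Q).card ≤ 2 := by
          apply card_window hμ hμ2 a L hL (j-1) _ _
          have : (0:ℝ) < μ ^ (j-1) * L := by positivity
          linarith
        have hPQ : ∀ σ, P σ → Q (fun i => σ (Fin.castLE hjp i)) := by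
          intro σ hσ
          obtain ⟨l1, l2⟩ := cf_restrict hμ.le h1μ k (j-1) hjp σ
          have hm1 := mul_le_mul_of_nonneg_left l1 hL.le
          have hm2 := mul_le_mul_of_nonneg_left l2 hL.le
          obtain ⟨hσ1, hσ2⟩ := hσ
          simp only [hQdef, Set.mem_Icc]
          constructor
          · nlinarith
          · nlinarith
        have h1 : Pk.card ≤ 2 ^ (k - (j-1)) * 2 :=
          card_filter_le_of_restrict hjp P Q hPQ 2 hQcard
        have h2 : k - (j-1) = (k - j) + 1 := by omega
        rw [h2] at h1
        have : (Pk.card : ℝ) ≤ 2 ^ ((k-j)+1) * 2 := by exact_mod_cast h1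
        refine this.trans ?_
        rw [pow_succ]
        ring_nf
        exact le_refl _
    -- convert to the rpow bound
    have hA : (2:ℝ) ^ (k - j) ≤ 2 * ((y-x)/δ) ^ γ := by
      rcases Nat.lt_or_ge j k with hlt | hge
      · have hB : (2:ℝ) ^ (k - 1 - j) ≤ ((y-x)/δ) ^ γ := by
          refine two_pow_le hμ hμ2 hγ hδ (show k - 1 = (k-1-j) + j by omega) hk1.le hj
        have h2 : k - j = (k - 1 - j) + 1 := by omega
        rw [h2, pow_succ]
        linarith
      · have hjke : j = k := le_antisymm hjk hge
        have h1 : k - j = 0 := by omega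
        rw [h1, pow_zero]
        have hB : (1:ℝ) ≤ ((y-x)/δ) ^ γ := by
          have h1 : (1:ℝ) ≤ (y-x)/δ := by
            rw [le_div_iff₀ hδ]
            linarith
          calc (1:ℝ) = 1 ^ γ := (Real.one_rpow γ).symm
            _ ≤ ((y-x)/δ) ^ γ := Real.rpow_le_rpow zero_le_one h1 hγ0
        linarith
    have hid : 8 * δ ^ (-γ) * (y-x) ^ γ = 8 * ((y-x)/δ) ^ γ := by
      rw [Real.div_rpow hℓ0.le hδ.le, Real.rpow_neg hδ.le]
      ring
    rw [hid]
    calc (covN (cantorMid μ a L m ∩ Set.Ioo x y) δ : ℝ) ≤ (Pk.card : ℝ) := by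
          exact_mod_cast hcovN
      _ ≤ 4 * 2 ^ (k - j) := hcount
      _ ≤ 4 * (2 * ((y-x)/δ) ^ γ) := by linarith
      _ = 8 * ((y-x)/δ) ^ γ := by ring
  · -- Part 2 : δ ≤ δ_m ≤ |I|
    intro hs1 hs2
    have hδm0 : (0:ℝ) < μ ^ m * L := by positivity
    have hkex : ∃ n, μ ^ n * L ≤ y - x := ⟨m, hs2⟩
    set k := Nat.find hkex with hkdef
    have hk : μ ^ k * L ≤ y - x := Nat.find_spec hkex
    have hkm : k ≤ m := Nat.find_min' hkex hs2
    set P : (Fin m → Bool) → Prop := fun σ => mid σ ∈ Set.Ioo x y with hPdef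
    set Pm := Finset.univ.filter P with hPm
    set t := Pm.image mid with ht
    have hcov : cantorMid μ a L m ∩ Set.Ioo x y ⊆ ⋃ c ∈ t, Set.Icc c (c + δ) := by
      intro p hp
      obtain ⟨σ, rfl⟩ := (hmem p).mp hp.1
      have hσP : P σ := hp.2
      have hct : mid σ ∈ t :=
        Finset.mem_image_of_mem _ (Finset.mem_filter.mpr ⟨Finset.mem_univ _, hσP⟩)
      exact Set.mem_biUnion hct (Set.mem_Icc.mpr ⟨le_refl _, by linarith⟩)
    have hcovN : covN (cantorMid μ a L m ∩ Set.Ioo x y) δ ≤ Pm.card :=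
      le_trans (covN_le_card _ _ t hcov) (Finset.card_image_le)
    have hcount : (Pm.card : ℝ) ≤ 4 * 2 ^ (m - k) := by
      rcases Nat.eq_zero_or_pos k with hk0 | hk1
      · have h1 : Pm.card ≤ 2 ^ m := by
          calc Pm.card ≤ (Finset.univ : Finset (Fin m → Bool)).card :=
                Finset.card_filter_le _ _
            _ = 2 ^ m := by simp
        have h2 : (Pm.card : ℝ) ≤ 2 ^ m := by exact_mod_cast h1
        rw [hk0]
        refine h2.trans ?_
        have : (2:ℝ) ^ m ≤ 4 * 2 ^ m := by nlinarith [pow_pos (by norm_num : (0:ℝ) < 2) m]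
        simpa using this
      · have hjp : k - 1 ≤ m := by omega
        have hwin : y - x < μ ^ (k-1) * L := by
          have := Nat.find_min hkex (show k - 1 < k by omega)
          exact not_le.mp this
        set Q : (Fin (k-1) → Bool) → Prop :=
          fun τ => a + L * cf μ (k-1) τ ∈ Set.Icc (x - μ ^ (k-1) * L) y with hQdef
        have hQcard : (Finset.univ.filter Q).card ≤ 2 := by
          apply card_window hμ hμ2 a L hL (k-1) _ _
          have : (0:ℝ) < μ ^ (k-1) * L := by positivity
          linarith
        have hPQ : ∀ σ, P σ → Q (fun i => σ (Fin.castLE hjp i)) := by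
          intro σ hσ
          obtain ⟨hs1', hs2'⟩ := hsand (k-1) hjp σ
          obtain ⟨hσ1, hσ2⟩ := hσ
          simp only [hQdef, Set.mem_Icc]
          exact ⟨by linarith, by linarith⟩
        have h1 : Pm.card ≤ 2 ^ (m - (k-1)) * 2 :=
          card_filter_le_of_restrict hjp P Q hPQ 2 hQcard
        have h2 : m - (k-1) = (m - k) + 1 := by omega
        rw [h2] at h1
        have h3 : (Pm.card : ℝ) ≤ 2 ^ ((m-k)+1) * 2 := by exact_mod_cast h1
        refine h3.trans ?_
        rw [pow_succ]
        ring_nf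
        exact le_refl _
    have hA : (2:ℝ) ^ (m - k) ≤ ((y-x)/(μ ^ m * L)) ^ γ :=
      two_pow_le hμ hμ2 hγ hδm0 (show m = (m-k) + k by omega) (le_refl _) hk
    have hid : 4 * (μ ^ m * L) ^ (-γ) * (y-x) ^ γ = 4 * ((y-x)/(μ ^ m * L)) ^ γ := by
      rw [Real.div_rpow hℓ0.le hδm0.le, Real.rpow_neg hδm0.le]
      ring
    rw [hid]
    calc (covN (cantorMid μ a L m ∩ Set.Ioo x y) δ : ℝ) ≤ (Pm.card : ℝ) := by
          exact_mod_cast hcovN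
      _ ≤ 4 * 2 ^ (m - k) := hcount
      _ ≤ 4 * ((y-x)/(μ ^ m * L)) ^ γ := by linarith
  · -- Part 3 : |I| < δ_m
    intro hsmall
    rcases Set.eq_empty_or_nonempty (cantorMid μ a L m ∩ Set.Ioo x y) with hE0 | ⟨p, hp⟩
    · have h1 : covN (cantorMid μ a L m ∩ Set.Ioo x y) δ ≤ ({0} : Finset ℝ).card :=
        covN_le_card _ _ _ (by rw [hE0]; exact Set.empty_subset _)
      simpa using h1
    · have hcov : cantorMid μ a L m ∩ Set.Ioo x y ⊆ ⋃ c ∈ ({p} : Finset ℝ), Set.Icc c (c + δ) := by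
        intro q hq
        have hqp : q = p := by
          obtain ⟨σ, rfl⟩ := (hmem q).mp hq.1
          obtain ⟨τ, hpτ⟩ := (hmem p).mp hp.1
          by_contra hne
          have hστ : σ ≠ τ := by
            intro he
            apply hne
            rw [hpτ, he]
          have := hmidsep σ τ hστ
          rw [← hpτ] at this
          obtain ⟨hq1, hq2⟩ := hq.2
          obtain ⟨hp1, hp2⟩ := hp.2
          have habs : |mid σ - p| < μ ^ m * L :=
            abs_sub_lt_iff.mpr ⟨by linarith, by linarith⟩
          linarith
        rw [hqp]
        refine Set.mem_biUnion (Finset.mem_singleton_self p) ?_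
        exact Set.mem_Icc.mpr ⟨le_refl _, by linarith⟩
      have h1 := covN_le_card _ δ {p} hcov
      simpa using h1
end

section
/- Let J be a compact interval, 0 < μ ≤ 1/2, and γ = log 2/log(1/μ). Let C_μ(J) be the self-similar Cantor set obtained by repeatedly removing the open middle piece of relative length 1−2μ. Then for every δ ∈ (0,|J|), (1/2)|J|^γ δ^{-γ} ≤ N(C_μ(J), δ) ≤ 2 |J|^γ δ^{-γ}. -/
/-- The union of the `2^m` intervals of length `μ^m L` of the `m`-th generation of the
middle-piece Cantor construction with ratio `μ` on `[a, a+L]`. -/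
noncomputable def cantorGen (μ a L : ℝ) (m : ℕ) : Set ℝ :=
  ⋃ σ : Fin m → Bool,
    Set.Icc (a + L * ∑ i : Fin m, (if σ i then (1 - μ) * μ ^ (i : ℕ) else 0))
      (a + L * ∑ i : Fin m, (if σ i then (1 - μ) * μ ^ (i : ℕ) else 0) + μ ^ m * L)

/-- The self-similar Cantor set with ratio `μ` on `[a, a+L]`. -/
noncomputable def cantorSetMu (μ a L : ℝ) : Set ℝ := ⋂ m : ℕ, cantorGen μ a L m

open Finset

namespace Stmt6Aux



noncomputable def vsum (μ : ℝ) {M : ℕ} (σ : Fin M → Bool) : ℝ :=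
  ∑ i : Fin M, if σ i then (1 - μ) * μ ^ (i : ℕ) else 0

lemma sum_all {μ : ℝ} (M : ℕ) : (∑ i : Fin M, (1 - μ) * μ ^ (i : ℕ)) = 1 - μ ^ M := by
  rw [Fin.sum_univ_eq_sum_range (fun n => (1 - μ) * μ ^ n) M]
  have h := Finset.sum_range_sub' (fun n => μ ^ n) M
  simp only [pow_zero] at h
  rw [← h]
  exact Finset.sum_congr rfl fun n _ => by ring

lemma vsum_nonneg {μ : ℝ} (hμ0 : 0 ≤ μ) (hμ1 : μ ≤ 1) {M : ℕ} (σ : Fin M → Bool) :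
    0 ≤ vsum μ σ := by
  refine Finset.sum_nonneg fun i _ => ?_
  split
  · have : (0:ℝ) ≤ 1 - μ := by linarith
    positivity
  · exact le_refl 0

lemma vsum_le {μ : ℝ} (hμ0 : 0 ≤ μ) (hμ1 : μ ≤ 1) {M : ℕ} (σ : Fin M → Bool) :
    vsum μ σ ≤ 1 - μ ^ M := by
  rw [← sum_all (μ := μ) M]
  refine Finset.sum_le_sum fun i _ => ?_
  split
  · exact le_refl _
  · have : (0:ℝ) ≤ 1 - μ := by linarith
    positivity

lemma vsum_succ {μ : ℝ} {M : ℕ} (σ : Fin (M + 1) → Bool) :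
    vsum μ σ = (if σ 0 then (1 - μ) else 0) + μ * vsum μ (Fin.tail σ) := by
  unfold vsum
  rw [Fin.sum_univ_succ, Finset.mul_sum]
  congr 1
  · simp
  · refine Finset.sum_congr rfl fun i _ => ?_
    have : Fin.tail σ i = σ i.succ := rfl
    rw [← this]
    split <;> simp [pow_succ] <;> ring





lemma rpow_concave {γ : ℝ} (hγ0 : 0 < γ) (hγ1 : γ ≤ 1) {x y : ℝ} (hx : 0 ≤ x) (hy : 0 ≤ y) :
    x ^ γ + y ^ γ ≤ 2 * ((x + y) / 2) ^ γ := by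
  rcases eq_or_lt_of_le hγ1 with rfl | hγ1'
  · simp only [Real.rpow_one]; linarith
  · have h := (Real.strictConcaveOn_rpow hγ0 hγ1').concaveOn.2
      (Set.mem_Ici.2 hx) (Set.mem_Ici.2 hy)
      (by norm_num : (0:ℝ) ≤ 1/2) (by norm_num : (0:ℝ) ≤ 1/2) (by norm_num)
    simp only [smul_eq_mul] at h
    have : (1:ℝ)/2 * x + 1/2 * y = (x + y) / 2 := by ring
    rw [this] at h
    linarith

lemma max_rpow {γ : ℝ} (hγ0 : 0 ≤ γ) {x y : ℝ} (hx : 0 ≤ x) (hy : 0 ≤ y) :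
    max x y ^ γ = max (x ^ γ) (y ^ γ) := by
  rcases le_total x y with h | h
  · rw [max_eq_right h, max_eq_right (Real.rpow_le_rpow hx h hγ0)]
  · rw [max_eq_left h, max_eq_left (Real.rpow_le_rpow hy h hγ0)]



lemma pow_rpow {μ γ : ℝ} (hμ : 0 < μ) (hμγ : μ ^ γ = (1/2 : ℝ)) (n : ℕ) :
    ((μ ^ n : ℝ)) ^ γ = (1/2 : ℝ) ^ n := by
  rw [← Real.rpow_natCast μ n, ← Real.rpow_mul hμ.le, mul_comm, Real.rpow_mul hμ.le,
    hμγ, Real.rpow_natCast]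


lemma key_ineq {μ δ c aa bb q : ℝ} (hμ : 0 < μ) (hμ2 : μ ≤ 1/2) (hδ0 : 0 ≤ δ) (hδ1 : δ < 1)
    (hq0 : 0 < q) (hq1 : q ≤ 1)
    (hc : c ≤ μ - μ*q) (hd : 1 - μ ≤ c + δ)
    (ha2 : aa ≤ μ - μ*q - c) (ha3 : aa ≤ μ - μ*q)
    (hbb1 : bb ≤ c + δ - (1-μ)) (hbb2 : bb ≤ μ - μ*q) :
    max (μ*(μ*q)) aa + max (μ*(μ*q)) bb ≤ 2*(μ*δ) := by
  have hd2 : μ * q ≤ δ := by linarith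
  rcases max_cases (μ*(μ*q)) aa with ⟨e1, h1⟩ | ⟨e1, h1⟩ <;>
    rcases max_cases (μ*(μ*q)) bb with ⟨e2, h2⟩ | ⟨e2, h2⟩ <;> rw [e1, e2]
  · -- P + P
    nlinarith [mul_le_mul_of_nonneg_left hd2 (by positivity : (0:ℝ) ≤ 2*μ)]
  · -- P + bb : here aa < μμq, and bb ≥ μμq
    have hbδ : bb + (1 - 2*μ) + μ*q ≤ δ := by linarith
    nlinarith [mul_le_mul_of_nonneg_left hbδ (by positivity : (0:ℝ) ≤ 2*μ),
      mul_nonneg (by linarith : (0:ℝ) ≤ 1 - 2*μ) (by nlinarith [mul_pos hμ hq0] : (0:ℝ) ≤ 2*μ - bb),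
      mul_pos (mul_pos hμ hμ) hq0]
  · -- aa + P
    have haδ : aa + (1 - 2*μ) + μ*q ≤ δ := by linarith
    nlinarith [mul_le_mul_of_nonneg_left haδ (by positivity : (0:ℝ) ≤ 2*μ),
      mul_nonneg (by linarith : (0:ℝ) ≤ 1 - 2*μ) (by nlinarith [mul_pos hμ hq0] : (0:ℝ) ≤ 2*μ - aa),
      mul_pos (mul_pos hμ hμ) hq0]
  · -- aa + bb
    nlinarith [mul_nonneg (by linarith : (0:ℝ) ≤ 1 - 2*μ) (by linarith : (0:ℝ) ≤ 1 - δ),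
      mul_pos hμ hq0]


open Classical in
lemma count_le {μ : ℝ} (hμ : 0 < μ) (hμ2 : μ ≤ 1/2) {γ : ℝ} (hγ0 : 0 < γ) (hγ1 : γ ≤ 1)
    (hμγ : μ ^ γ = (1/2 : ℝ)) :
    ∀ (M : ℕ) (c δ : ℝ), 0 ≤ δ →
      ((Finset.univ.filter fun σ : Fin M → Bool => vsum μ σ ∈ Set.Icc c (c + δ)).card : ℝ)
        ≤ max 1 (2 * 2 ^ M * δ ^ γ) := by
  have hμ1 : μ ≤ 1 := by linarith
  intro M
  induction M with
  | zero =>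
    intro c δ hδ
    have h1 : ((Finset.univ.filter fun σ : Fin 0 → Bool =>
        vsum μ σ ∈ Set.Icc c (c + δ)).card : ℝ) ≤ 1 := by
      have := Finset.card_filter_le (Finset.univ : Finset (Fin 0 → Bool))
        (fun σ => vsum μ σ ∈ Set.Icc c (c + δ))
      have hcard : (Finset.univ : Finset (Fin 0 → Bool)).card = 1 := by simp
      exact_mod_cast le_trans this (le_of_eq hcard)
    exact le_trans h1 (le_max_left _ _)
  | succ M ih =>
    intro c δ hδ
    by_cases hδ1 : 1 ≤ δ
    · refine le_trans ?_ (le_max_right _ _)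
      have hcard : ((Finset.univ.filter fun σ : Fin (M+1) → Bool =>
          vsum μ σ ∈ Set.Icc c (c + δ)).card : ℝ) ≤ 2 ^ (M+1) := by
        have := Finset.card_filter_le (Finset.univ : Finset (Fin (M+1) → Bool))
          (fun σ => vsum μ σ ∈ Set.Icc c (c + δ))
        have hcard2 : (Finset.univ : Finset (Fin (M+1) → Bool)).card = 2 ^ (M+1) := by
          simp [Finset.card_univ]
        calc ((Finset.univ.filter fun σ : Fin (M+1) → Bool =>
            vsum μ σ ∈ Set.Icc c (c + δ)).card : ℝ)
            ≤ ((Finset.univ : Finset (Fin (M+1) → Bool)).card : ℝ) := by exact_mod_cast this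
          _ = 2 ^ (M+1) := by exact_mod_cast hcard2
      have h1 : (1:ℝ) ≤ δ ^ γ := by
        calc (1:ℝ) = 1 ^ γ := (Real.one_rpow γ).symm
        _ ≤ δ ^ γ := Real.rpow_le_rpow (by norm_num) hδ1 hγ0.le
      nlinarith [pow_pos (by norm_num : (0:ℝ) < 2) (M+1)]
    push_neg at hδ1
    have hP : (0:ℝ) < μ ^ (M+2) := pow_pos hμ _
    have hpow2 : (0:ℝ) < 2 ^ (M+2) := by positivity
    set S := Finset.univ.filter
      (fun σ : Fin (M+1) → Bool => vsum μ σ ∈ Set.Icc c (c + δ)) with hSdef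
    -- the unconditional child bound
    have childbound : ∀ (b : Bool) (e : ℝ), ((if b = true then 1 - μ else 0) = e) →
        ((S.filter fun σ => σ 0 = b).card : ℝ) ≤
          2 ^ (M+2) * (max (μ ^ (M+2))
            (μ * (min ((c - e + δ)/μ) (1 - μ^M) - max ((c - e)/μ) 0))) ^ γ := by
      intro b e he
      set lo := max ((c - e)/μ) 0 with hlo
      set hi := min ((c - e + δ)/μ) (1 - μ^M) with hhi
      set A := hi - lo with hA
      have hstep1 : (S.filter fun σ => σ 0 = b).card ≤
          (Finset.univ.filter fun τ : Fin M → Bool => vsum μ τ ∈ Set.Icc lo (lo + A)).card := by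
        apply Finset.card_le_card_of_injOn Fin.tail
        · intro σ hσ
          replace hσ : σ ∈ S.filter (fun σ => σ 0 = b) := hσ
          show Fin.tail σ ∈ Finset.univ.filter (fun τ : Fin M → Bool => vsum μ τ ∈ Set.Icc lo (lo + A))
          simp only [hSdef, Finset.mem_filter, Finset.mem_univ, true_and, Set.mem_Icc] at hσ ⊢
          obtain ⟨⟨h1, h2⟩, hb⟩ := hσ
          have hv := vsum_succ (μ := μ) σ
          rw [hb, he] at hv
          have hvt0 : 0 ≤ vsum μ (Fin.tail σ) := vsum_nonneg hμ.le hμ1 _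
          have hvt1 : vsum μ (Fin.tail σ) ≤ 1 - μ ^ M := vsum_le hμ.le hμ1 _
          have hlon : lo ≤ vsum μ (Fin.tail σ) := by
            apply max_le _ hvt0
            rw [div_le_iff₀ hμ]
            nlinarith
          refine ⟨hlon, ?_⟩
          have hhin : vsum μ (Fin.tail σ) ≤ hi := by
            apply le_min _ hvt1
            rw [le_div_iff₀ hμ]
            nlinarith
          calc vsum μ (Fin.tail σ) ≤ hi := hhin
            _ = lo + A := by rw [hA]; ring
        · intro σ1 h1 σ2 h2 ht
          simp only [Finset.coe_filter, Set.mem_setOf_eq] at h1 h2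
          rw [← Fin.cons_self_tail σ1, ← Fin.cons_self_tail σ2, h1.2, h2.2, ht]
      rcases lt_or_ge A 0 with hAneg | hApos
      · have hzero : (Finset.univ.filter fun τ : Fin M → Bool =>
            vsum μ τ ∈ Set.Icc lo (lo + A)).card = 0 := by
          rw [Finset.card_eq_zero]
          apply Finset.filter_false_of_mem
          intro τ _
          rw [Set.mem_Icc]
          intro ⟨ha, hb2⟩
          linarith
        rw [hzero] at hstep1
        have h0 : (S.filter fun σ => σ 0 = b).card = 0 := Nat.le_zero.mp hstep1
        rw [h0]
        push_cast
        positivity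
      · have hIH := ih lo A hApos
        have hcast : ((S.filter fun σ => σ 0 = b).card : ℝ) ≤
            ((Finset.univ.filter fun τ : Fin M → Bool =>
              vsum μ τ ∈ Set.Icc lo (lo + A)).card : ℝ) := by exact_mod_cast hstep1
        refine le_trans (le_trans hcast hIH) (le_of_eq ?_)
        rw [max_rpow hγ0.le hP.le (by positivity : (0:ℝ) ≤ μ * A),
          mul_max_of_nonneg _ _ hpow2.le]
        have e1 : (2:ℝ) ^ (M+2) * (μ ^ (M+2)) ^ γ = 1 := by
          rw [pow_rpow hμ hμγ, ← mul_pow]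
          norm_num
        have e2 : (2:ℝ) ^ (M+2) * (μ * A) ^ γ = 2 * 2 ^ M * A ^ γ := by
          rw [Real.mul_rpow hμ.le hApos, hμγ]
          ring
        rw [e1, e2]
    -- split the cardinality
    have hsplit : ((S.filter fun σ => σ 0 = false).card : ℝ)
        + ((S.filter fun σ => σ 0 = true).card : ℝ) = (S.card : ℝ) := by
      have h := Finset.card_filter_add_card_filter_not
        (s := S) (p := fun σ => σ 0 = false)
      have h2 : (S.filter fun σ => ¬ (σ 0 = false)) = S.filter fun σ => σ 0 = true := by
        apply Finset.filter_congr
        intro x _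
        simp
      rw [h2] at h
      exact_mod_cast h
    have hb0 := childbound false 0 (by simp)
    have hb1 := childbound true (1 - μ) (by simp)
    -- basic bounds on the trimmed lengths
    have length_le : ∀ e : ℝ,
        μ * (min ((c - e + δ)/μ) (1 - μ^M) - max ((c - e)/μ) 0) ≤ δ := by
      intro e
      have l1 : μ * min ((c - e + δ)/μ) (1 - μ^M) ≤ c - e + δ := by
        calc μ * min ((c - e + δ)/μ) (1 - μ^M) ≤ μ * ((c - e + δ)/μ) :=
              mul_le_mul_of_nonneg_left (min_le_left _ _) hμ.le
          _ = c - e + δ := by field_simp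
      have l2 : c - e ≤ μ * max ((c - e)/μ) 0 := by
        calc c - e = μ * ((c - e)/μ) := by field_simp
          _ ≤ μ * max ((c - e)/μ) 0 := mul_le_mul_of_nonneg_left (le_max_left _ _) hμ.le
      calc μ * (min ((c - e + δ)/μ) (1 - μ^M) - max ((c - e)/μ) 0)
          = μ * min ((c - e + δ)/μ) (1 - μ^M) - μ * max ((c - e)/μ) 0 := by ring
        _ ≤ (c - e + δ) - (c - e) := sub_le_sub l1 l2
        _ = δ := by ring
    -- a final conversion used in the "one-sided" case
    have onesided : ∀ x : ℝ, x ≤ δ →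
        2 ^ (M+2) * (max (μ ^ (M+2)) x) ^ γ ≤ max 1 (2 * 2 ^ (M+1) * δ ^ γ) := by
      intro x hx
      have h1 : max (μ ^ (M+2)) x ≤ max (μ ^ (M+2)) δ := max_le_max le_rfl hx
      have h2 : (max (μ ^ (M+2)) x) ^ γ ≤ (max (μ ^ (M+2)) δ) ^ γ :=
        Real.rpow_le_rpow (le_trans hP.le (le_max_left _ _)) h1 hγ0.le
      calc 2 ^ (M+2) * (max (μ ^ (M+2)) x) ^ γ
          ≤ 2 ^ (M+2) * (max (μ ^ (M+2)) δ) ^ γ := mul_le_mul_of_nonneg_left h2 hpow2.le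
        _ = max (2 ^ (M+2) * (μ ^ (M+2)) ^ γ) (2 ^ (M+2) * δ ^ γ) := by
            rw [max_rpow hγ0.le hP.le hδ, mul_max_of_nonneg _ _ hpow2.le]
        _ = max 1 (2 * 2 ^ (M+1) * δ ^ γ) := by
            congr 1
            · rw [pow_rpow hμ hμγ, ← mul_pow]; norm_num
            · ring
    by_cases hboth : (S.filter fun σ => σ 0 = false).Nonempty ∧
        (S.filter fun σ => σ 0 = true).Nonempty
    · -- main case: the interval meets both children
      obtain ⟨⟨σf, hσf⟩, ⟨σt, hσt⟩⟩ := hboth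
      simp only [hSdef, Finset.mem_filter, Finset.mem_univ, true_and, Set.mem_Icc] at hσf hσt
      obtain ⟨⟨hf1, hf2⟩, hfb⟩ := hσf
      obtain ⟨⟨ht1, ht2⟩, htb⟩ := hσt
      have hvf := vsum_succ (μ := μ) σf
      rw [hfb] at hvf
      simp only [Bool.false_eq_true, if_false] at hvf
      have hvt := vsum_succ (μ := μ) σt
      rw [htb] at hvt
      simp only [if_true] at hvt
      have hvf1 : vsum μ (Fin.tail σf) ≤ 1 - μ ^ M := vsum_le hμ.le hμ1 _
      have hvt0 : 0 ≤ vsum μ (Fin.tail σt) := vsum_nonneg hμ.le hμ1 _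
      have hcgeo : c ≤ μ - μ * μ ^ M := by
        calc c ≤ vsum μ σf := hf1
          _ = μ * vsum μ (Fin.tail σf) := by rw [hvf]; ring
          _ ≤ μ * (1 - μ ^ M) := mul_le_mul_of_nonneg_left hvf1 hμ.le
          _ = μ - μ * μ ^ M := by ring
      have hdgeo : 1 - μ ≤ c + δ := by
        have h5 : 0 ≤ μ * vsum μ (Fin.tail σt) := mul_nonneg hμ.le hvt0
        calc 1 - μ ≤ (1 - μ) + μ * vsum μ (Fin.tail σt) := by linarith
          _ = vsum μ σt := hvt.symm
          _ ≤ c + δ := ht2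
      -- trimmed length bounds
      set aa := μ * (min ((c - 0 + δ)/μ) (1 - μ^M) - max ((c - 0)/μ) 0) with haa
      set bb := μ * (min ((c - (1-μ) + δ)/μ) (1 - μ^M) - max ((c - (1-μ))/μ) 0) with hbb
      have ha2 : aa ≤ μ - μ * μ ^ M - c := by
        have l1 : μ * min ((c - 0 + δ)/μ) (1 - μ^M) ≤ μ * (1 - μ^M) :=
          mul_le_mul_of_nonneg_left (min_le_right _ _) hμ.le
        have l2 : c - 0 ≤ μ * max ((c - 0)/μ) 0 := by
          calc c - 0 = μ * ((c - 0)/μ) := by field_simp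
            _ ≤ μ * max ((c - 0)/μ) 0 := mul_le_mul_of_nonneg_left (le_max_left _ _) hμ.le
        calc aa = μ * min ((c - 0 + δ)/μ) (1 - μ^M) - μ * max ((c - 0)/μ) 0 := by
              rw [haa]; ring
          _ ≤ μ * (1 - μ^M) - (c - 0) := sub_le_sub l1 l2
          _ = μ - μ * μ ^ M - c := by ring
      have ha3 : aa ≤ μ - μ * μ ^ M := by
        have l1 : μ * min ((c - 0 + δ)/μ) (1 - μ^M) ≤ μ * (1 - μ^M) :=
          mul_le_mul_of_nonneg_left (min_le_right _ _) hμ.le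
        have l2 : 0 ≤ μ * max ((c - 0)/μ) 0 := mul_nonneg hμ.le (le_max_right _ _)
        calc aa = μ * min ((c - 0 + δ)/μ) (1 - μ^M) - μ * max ((c - 0)/μ) 0 := by
              rw [haa]; ring
          _ ≤ μ * (1 - μ^M) - 0 := sub_le_sub l1 l2
          _ = μ - μ * μ ^ M := by ring
      have hbb1 : bb ≤ c + δ - (1 - μ) := by
        have l1 : μ * min ((c - (1-μ) + δ)/μ) (1 - μ^M) ≤ c - (1-μ) + δ := by
          calc μ * min ((c - (1-μ) + δ)/μ) (1 - μ^M) ≤ μ * ((c - (1-μ) + δ)/μ) :=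
                mul_le_mul_of_nonneg_left (min_le_left _ _) hμ.le
            _ = c - (1-μ) + δ := by field_simp
        have l2 : 0 ≤ μ * max ((c - (1-μ))/μ) 0 := mul_nonneg hμ.le (le_max_right _ _)
        calc bb = μ * min ((c - (1-μ) + δ)/μ) (1 - μ^M) - μ * max ((c - (1-μ))/μ) 0 := by
              rw [hbb]; ring
          _ ≤ (c - (1-μ) + δ) - 0 := sub_le_sub l1 l2
          _ = c + δ - (1 - μ) := by ring
      have hbb2 : bb ≤ μ - μ * μ ^ M := by
        have l1 : μ * min ((c - (1-μ) + δ)/μ) (1 - μ^M) ≤ μ * (1 - μ^M) :=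
          mul_le_mul_of_nonneg_left (min_le_right _ _) hμ.le
        have l2 : 0 ≤ μ * max ((c - (1-μ))/μ) 0 := mul_nonneg hμ.le (le_max_right _ _)
        calc bb = μ * min ((c - (1-μ) + δ)/μ) (1 - μ^M) - μ * max ((c - (1-μ))/μ) 0 := by
              rw [hbb]; ring
          _ ≤ μ * (1 - μ^M) - 0 := sub_le_sub l1 l2
          _ = μ - μ * μ ^ M := by ring
      have hq0 : (0:ℝ) < μ ^ M := pow_pos hμ _
      have hq1 : μ ^ M ≤ 1 := pow_le_one₀ hμ.le hμ1
      have key := key_ineq hμ hμ2 hδ hδ1 hq0 hq1 hcgeo hdgeo ha2 ha3 hbb1 hbb2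
      have hPrw : μ * (μ * μ ^ M) = μ ^ (M+2) := by ring
      rw [hPrw] at key
      have hu0 : (0:ℝ) ≤ max (μ ^ (M+2)) aa := le_trans hP.le (le_max_left _ _)
      have hw0 : (0:ℝ) ≤ max (μ ^ (M+2)) bb := le_trans hP.le (le_max_left _ _)
      have hconc := rpow_concave hγ0 hγ1 hu0 hw0
      have hmid : ((max (μ ^ (M+2)) aa + max (μ ^ (M+2)) bb) / 2) ^ γ ≤ (μ * δ) ^ γ := by
        apply Real.rpow_le_rpow (by positivity) (by linarith) hγ0.le
      have hmuδ : (μ * δ) ^ γ = (1/2) * δ ^ γ := by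
        rw [Real.mul_rpow hμ.le hδ, hμγ]
      refine le_trans (le_of_eq hsplit.symm) (le_trans (add_le_add hb0 hb1) ?_)
      refine le_trans ?_ (le_max_right _ _)
      calc 2 ^ (M+2) * (max (μ ^ (M+2)) aa) ^ γ + 2 ^ (M+2) * (max (μ ^ (M+2)) bb) ^ γ
          = 2 ^ (M+2) * ((max (μ ^ (M+2)) aa) ^ γ + (max (μ ^ (M+2)) bb) ^ γ) := by ring
        _ ≤ 2 ^ (M+2) * (2 * ((max (μ ^ (M+2)) aa + max (μ ^ (M+2)) bb) / 2) ^ γ) :=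
            mul_le_mul_of_nonneg_left hconc hpow2.le
        _ ≤ 2 ^ (M+2) * (2 * ((μ * δ)) ^ γ) := by
            have := mul_le_mul_of_nonneg_left hmid (by norm_num : (0:ℝ) ≤ 2)
            exact mul_le_mul_of_nonneg_left this hpow2.le
        _ = 2 * 2 ^ (M+1) * δ ^ γ := by rw [hmuδ]; ring
    · -- one of the two children contributes nothing
      rw [not_and_or] at hboth
      rcases hboth with hone | hone <;>
        rw [Finset.not_nonempty_iff_eq_empty] at hone <;>
        rw [hone] at hsplit <;>
        simp only [Finset.card_empty, Nat.cast_zero, zero_add, add_zero] at hsplit <;>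
        rw [← hsplit]
      · exact le_trans hb1 (onesided _ (length_le _))
      · exact le_trans hb0 (onesided _ (length_le _))


noncomputable def wsum (μ : ℝ) (s : ℕ → Bool) (M : ℕ) : ℝ :=
  ∑ n ∈ Finset.range M, if s n then (1 - μ) * μ ^ n else 0

lemma geom_range {μ : ℝ} (N : ℕ) : ∑ n ∈ Finset.range N, (1 - μ) * μ ^ n = 1 - μ ^ N := by
  have h := Finset.sum_range_sub' (fun n => μ ^ n) N
  simp only [pow_zero] at h
  rw [← h]
  exact Finset.sum_congr rfl fun n _ => by ring

lemma vsum_restrict {μ : ℝ} (s : ℕ → Bool) (k : ℕ) :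
    vsum μ (fun i : Fin k => s i) = wsum μ s k := by
  unfold vsum wsum
  exact Fin.sum_univ_eq_sum_range (fun n => if s n then (1 - μ) * μ ^ n else 0) k

lemma wsum_mono {μ : ℝ} (hμ0 : 0 ≤ μ) (hμ1 : μ ≤ 1) (s : ℕ → Bool) {k K : ℕ} (h : k ≤ K) :
    wsum μ s k ≤ wsum μ s K := by
  apply Finset.sum_le_sum_of_subset_of_nonneg (Finset.range_subset_range.2 h)
  intro n _ _
  have : (0:ℝ) ≤ 1 - μ := by linarith
  split
  · positivity
  · exact le_rfl

lemma wsum_upper {μ : ℝ} (hμ0 : 0 ≤ μ) (hμ1 : μ ≤ 1) (s : ℕ → Bool) {k K : ℕ} (h : k ≤ K) :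
    wsum μ s K ≤ wsum μ s k + μ ^ k := by
  have hadd := Finset.sum_range_add_sum_Ico
    (fun n => if s n then (1 - μ) * μ ^ n else 0) h
  have hadd2 := Finset.sum_range_add_sum_Ico (fun n => (1 - μ) * μ ^ n) h
  have hico : (∑ n ∈ Finset.Ico k K, if s n then (1 - μ) * μ ^ n else 0)
      ≤ ∑ n ∈ Finset.Ico k K, (1 - μ) * μ ^ n := by
    apply Finset.sum_le_sum
    intro n _
    have : (0:ℝ) ≤ 1 - μ := by linarith
    split
    · exact le_rfl
    · positivity
  have hico2 : ∑ n ∈ Finset.Ico k K, (1 - μ) * μ ^ n = μ ^ k - μ ^ K := by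
    have g1 := geom_range (μ := μ) k
    have g2 := geom_range (μ := μ) K
    linarith [hadd2, g1, g2]
  have hK : (0:ℝ) ≤ μ ^ K := by positivity
  have : wsum μ s K = wsum μ s k + ∑ n ∈ Finset.Ico k K, if s n then (1 - μ) * μ ^ n else 0 := by
    rw [wsum, wsum, ← hadd]
  rw [this]
  have : (∑ n ∈ Finset.Ico k K, if s n then (1 - μ) * μ ^ n else 0) ≤ μ ^ k := by
    calc (∑ n ∈ Finset.Ico k K, if s n then (1 - μ) * μ ^ n else 0)
        ≤ ∑ n ∈ Finset.Ico k K, (1 - μ) * μ ^ n := hico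
      _ = μ ^ k - μ ^ K := hico2
      _ ≤ μ ^ k := by linarith
  linarith

lemma wsum_ext {μ : ℝ} (s : ℕ → Bool) {M K : ℕ} (hs : ∀ n, M ≤ n → s n = false)
    (h : M ≤ K) : wsum μ s K = wsum μ s M := by
  have hadd := Finset.sum_range_add_sum_Ico
    (fun n => if s n then (1 - μ) * μ ^ n else 0) h
  have : (∑ n ∈ Finset.Ico M K, if s n then (1 - μ) * μ ^ n else 0) = 0 := by
    apply Finset.sum_eq_zero
    intro n hn
    rw [hs n (Finset.mem_Ico.1 hn).1]
    simp
  rw [wsum, wsum, ← hadd, this, add_zero]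

lemma point_mem {μ a L : ℝ} (hμ0 : 0 ≤ μ) (hμ1 : μ ≤ 1) (hL : 0 ≤ L) {M : ℕ}
    (σ : Fin M → Bool) : a + L * vsum μ σ ∈ cantorSetMu μ a L := by
  set s : ℕ → Bool := fun n => if h : n < M then σ ⟨n, h⟩ else false with hs
  have hres : vsum μ σ = wsum μ s M := by
    rw [← vsum_restrict s M]
    congr 1
    funext i
    simp [hs, i.isLt]
  have hsfalse : ∀ n, M ≤ n → s n = false := by
    intro n hn
    simp [hs, Nat.not_lt.2 hn]
  rw [cantorSetMu]
  refine Set.mem_iInter.2 fun k => ?_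
  rw [cantorGen]
  refine Set.mem_iUnion.2 ⟨fun i : Fin k => s i, ?_⟩
  have hrw : (∑ i : Fin k, if s i then (1 - μ) * μ ^ (i:ℕ) else 0) = wsum μ s k :=
    vsum_restrict s k
  rw [Set.mem_Icc, hrw, hres]
  have hsand : wsum μ s k ≤ wsum μ s M ∧ wsum μ s M ≤ wsum μ s k + μ ^ k := by
    rcases le_total k M with hkM | hMk
    · exact ⟨wsum_mono hμ0 hμ1 s hkM, wsum_upper hμ0 hμ1 s hkM⟩
    · rw [wsum_ext s hsfalse hMk]
      have : (0:ℝ) ≤ μ ^ k := by positivity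
      exact ⟨le_rfl, by linarith⟩
  obtain ⟨h1, h2⟩ := hsand
  constructor
  · have := mul_le_mul_of_nonneg_left h1 hL
    linarith
  · have := mul_le_mul_of_nonneg_left h2 hL
    nlinarith [this]


end Stmt6Aux

open Stmt6Aux in

open Classical in
/-- For the self-similar Cantor set `C_μ(J)` on `J = [a, a+L]` with
`γ = log 2 / log(1/μ)`, for every `δ ∈ (0,|J|)`,
`(1/2)|J|^γ δ^{-γ} ≤ N(C_μ(J), δ) ≤ 2 |J|^γ δ^{-γ}`. -/
theorem stmt6 (μ : ℝ) (hμ : 0 < μ) (hμ2 : μ ≤ 1/2) (a L : ℝ) (hL : 0 < L)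
    (γ : ℝ) (hγ : γ = Real.log 2 / Real.log (1/μ))
    (δ : ℝ) (hδ : 0 < δ) (hδL : δ < L) :
    (1/2) * L ^ γ * δ ^ (-γ) ≤ (covN (cantorSetMu μ a L) δ : ℝ) ∧
    (covN (cantorSetMu μ a L) δ : ℝ) ≤ 2 * L ^ γ * δ ^ (-γ) := by
  have hμ1 : μ < 1 := lt_of_le_of_lt hμ2 (by norm_num)
  -- γ facts
  have hlog2 : (0:ℝ) < Real.log 2 := Real.log_pos (by norm_num)
  have hlogμ : Real.log μ < 0 := Real.log_neg hμ hμ1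
  have hloginv : Real.log (1/μ) = - Real.log μ := by rw [one_div, Real.log_inv]
  have hγ0 : 0 < γ := by
    rw [hγ, hloginv]
    exact div_pos hlog2 (by linarith)
  have hγ1 : γ ≤ 1 := by
    rw [hγ, hloginv, div_le_one (by linarith)]
    have hmul : Real.log 2 + Real.log μ = Real.log (2 * μ) :=
      (Real.log_mul (by norm_num) hμ.ne').symm
    have h2μ : Real.log (2 * μ) ≤ 0 := Real.log_nonpos (by linarith) (by linarith)
    linarith
  have hμγ : μ ^ γ = (1/2 : ℝ) := by
    rw [Real.rpow_def_of_pos hμ, hγ, hloginv]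
    have hne : Real.log μ ≠ 0 := ne_of_lt hlogμ
    have hrw : Real.log μ * (Real.log 2 / - Real.log μ) = - Real.log 2 := by
      rw [div_neg, mul_neg, mul_comm, div_mul_cancel₀ _ hne]
    rw [hrw, Real.exp_neg, Real.exp_log (by norm_num : (0:ℝ) < 2)]
    norm_num
  have hδγpos : 0 < δ ^ γ := Real.rpow_pos_of_pos hδ γ
  have hLγpos : 0 < L ^ γ := Real.rpow_pos_of_pos hL γ
  have hδnegγ : δ ^ (-γ) = (δ ^ γ)⁻¹ := Real.rpow_neg hδ.le γ
  -- find the minimal generation m with μ^m L ≤ δ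
  have hex : ∃ m : ℕ, μ ^ m * L ≤ δ := by
    obtain ⟨n, hn⟩ := exists_pow_lt_of_lt_one (div_pos hδ hL) hμ1
    refine ⟨n, ?_⟩
    rw [← le_div_iff₀ hL]
    exact hn.le
  have hmle : μ ^ (Nat.find hex) * L ≤ δ := Nat.find_spec hex
  have hm0 : Nat.find hex ≠ 0 := by
    intro h
    have h2 := hmle
    rw [h] at h2
    simp at h2
    linarith
  obtain ⟨k, hk⟩ : ∃ k, Nat.find hex = k + 1 :=
    ⟨Nat.find hex - 1, (Nat.succ_pred_eq_of_pos (Nat.pos_of_ne_zero hm0)).symm⟩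
  have hnot : δ < μ ^ k * L := by
    have := Nat.find_min hex (m := k) (by omega)
    push_neg at this
    exact this
  rw [hk] at hmle
  -- the cover of generation k+1
  have hcardfun : Fintype.card (Fin (k+1) → Bool) = 2 ^ (k+1) := by simp
  set e := Fintype.equivFinOfCardEq hcardfun with he
  have hmem : 2 ^ (k+1) ∈ {n : ℕ | ∃ c : Fin n → ℝ,
      cantorSetMu μ a L ⊆ ⋃ i, Set.Icc (c i) (c i + δ)} := by
    refine ⟨fun i => a + L * vsum μ (e.symm i), fun x hx => ?_⟩
    have hx2 : x ∈ cantorGen μ a L (k+1) := Set.mem_iInter.1 hx (k+1)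
    rw [cantorGen] at hx2
    obtain ⟨σ, hσ⟩ := Set.mem_iUnion.1 hx2
    refine Set.mem_iUnion.2 ⟨e σ, ?_⟩
    show x ∈ Set.Icc (a + L * vsum μ (e.symm (e σ))) (a + L * vsum μ (e.symm (e σ)) + δ)
    rw [Equiv.symm_apply_apply]
    rw [Set.mem_Icc] at hσ ⊢
    have hveq : vsum μ σ = ∑ i : Fin (k+1), if σ i then (1 - μ) * μ ^ (i : ℕ) else 0 := rfl
    rw [hveq]
    exact ⟨hσ.1, le_trans hσ.2 (by linarith)⟩
  have hcovle : covN (cantorSetMu μ a L) δ ≤ 2 ^ (k+1) := Nat.sInf_le hmem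
  -- numeric upper bound
  have hupper : (covN (cantorSetMu μ a L) δ : ℝ) ≤ 2 * L ^ γ * δ ^ (-γ) := by
    have h1 : δ ^ γ < (μ ^ k * L) ^ γ := Real.rpow_lt_rpow hδ.le hnot hγ0
    have h2 : (μ ^ k * L) ^ γ = (1/2 : ℝ)^k * L ^ γ := by
      rw [Real.mul_rpow (by positivity) hL.le, pow_rpow hμ hμγ]
    rw [h2] at h1
    have h3 : ((1/2 : ℝ)^k * L ^ γ)⁻¹ < (δ ^ γ)⁻¹ := by
      apply inv_strictAnti₀ hδγpos h1
    have h4 : (0:ℝ) < (1/2 : ℝ)^k * L ^ γ := by positivity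
    have h5 : ((1/2 : ℝ)^k * L ^ γ)⁻¹ = 2^k * (L ^ γ)⁻¹ := by
      rw [mul_inv]
      congr 1
      rw [one_div, inv_pow, inv_inv]
    have hcast : (covN (cantorSetMu μ a L) δ : ℝ) ≤ 2 ^ (k+1) := by
      exact_mod_cast hcovle
    calc (covN (cantorSetMu μ a L) δ : ℝ) ≤ 2 ^ (k+1) := hcast
      _ = 2 * L ^ γ * (2^k * (L ^ γ)⁻¹) := by
          field_simp
          ring
      _ ≤ 2 * L ^ γ * (δ ^ γ)⁻¹ := by
          apply mul_le_mul_of_nonneg_left _ (by positivity)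
          rw [← h5]
          exact h3.le
      _ = 2 * L ^ γ * δ ^ (-γ) := by rw [hδnegγ]
  refine ⟨?_, hupper⟩
  -- lower bound
  have hNmem := Nat.sInf_mem (⟨2 ^ (k+1), hmem⟩ :
    {n : ℕ | ∃ c : Fin n → ℝ, cantorSetMu μ a L ⊆ ⋃ i, Set.Icc (c i) (c i + δ)}.Nonempty)
  obtain ⟨cc, hcc⟩ := hNmem
  set N := covN (cantorSetMu μ a L) δ with hN
  have hratio : (0:ℝ) < (δ/L) ^ γ := Real.rpow_pos_of_pos (div_pos hδ hL) γ
  obtain ⟨M, hM⟩ := pow_unbounded_of_one_lt ((2 * (δ/L)^γ)⁻¹) (by norm_num : (1:ℝ) < 2)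
  have hMge : (1:ℝ) ≤ 2 * 2 ^ M * (δ/L) ^ γ := by
    have hpos : (0:ℝ) < 2 * (δ/L)^γ := by positivity
    have h := mul_lt_mul_of_pos_right hM hpos
    rw [inv_mul_cancel₀ hpos.ne'] at h
    nlinarith
  -- counting
  have hsub : (Finset.univ : Finset (Fin M → Bool)) ⊆
      Finset.univ.biUnion (fun i : Fin N => Finset.univ.filter
        (fun σ : Fin M → Bool => a + L * vsum μ σ ∈ Set.Icc (cc i) (cc i + δ))) := by
    intro σ _
    have hp : a + L * vsum μ σ ∈ cantorSetMu μ a L := point_mem hμ.le hμ1.le hL.le σ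
    obtain ⟨i, hi⟩ := Set.mem_iUnion.1 (hcc hp)
    exact Finset.mem_biUnion.2 ⟨i, Finset.mem_univ _, Finset.mem_filter.2 ⟨Finset.mem_univ _, hi⟩⟩
  have hper : ∀ i : Fin N, ((Finset.univ.filter (fun σ : Fin M → Bool =>
      a + L * vsum μ σ ∈ Set.Icc (cc i) (cc i + δ))).card : ℝ) ≤ 2 * 2 ^ M * (δ/L) ^ γ := by
    intro i
    have hfeq : (Finset.univ.filter (fun σ : Fin M → Bool =>
        a + L * vsum μ σ ∈ Set.Icc (cc i) (cc i + δ))) =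
        (Finset.univ.filter (fun σ : Fin M → Bool =>
          vsum μ σ ∈ Set.Icc ((cc i - a)/L) ((cc i - a)/L + δ/L))) := by
      apply Finset.filter_congr
      intro σ _
      rw [Set.mem_Icc, Set.mem_Icc]
      constructor
      · intro ⟨u1, u2⟩
        constructor
        · rw [div_le_iff₀ hL]; linarith
        · rw [← add_div, le_div_iff₀ hL] at *
          nlinarith
      · intro ⟨u1, u2⟩
        rw [div_le_iff₀ hL] at u1
        rw [← add_div, le_div_iff₀ hL] at u2
        constructor <;> nlinarith
    rw [hfeq]
    have hcl := count_le hμ hμ2 hγ0 hγ1 hμγ M ((cc i - a)/L) (δ/L) (by positivity)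
    rw [max_eq_right hMge] at hcl
    exact hcl
  have hcount : ((2:ℝ)) ^ M ≤ (N:ℝ) * (2 * 2 ^ M * (δ/L) ^ γ) := by
    have h1 : (Finset.univ : Finset (Fin M → Bool)).card = 2 ^ M := by simp
    have h2 := le_trans (Finset.card_le_card hsub) (Finset.card_biUnion_le)
    rw [h1] at h2
    have h3 : ((2:ℕ) ^ M : ℝ) ≤ ∑ i : Fin N, ((Finset.univ.filter (fun σ : Fin M → Bool =>
        a + L * vsum μ σ ∈ Set.Icc (cc i) (cc i + δ))).card : ℝ) := by
      exact_mod_cast h2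
    calc ((2:ℝ)) ^ M = ((2:ℕ) ^ M : ℝ) := by push_cast; ring
      _ ≤ ∑ i : Fin N, ((Finset.univ.filter (fun σ : Fin M → Bool =>
          a + L * vsum μ σ ∈ Set.Icc (cc i) (cc i + δ))).card : ℝ) := h3
      _ ≤ ∑ _i : Fin N, (2 * 2 ^ M * (δ/L) ^ γ) := Finset.sum_le_sum (fun i _ => hper i)
      _ = (N:ℝ) * (2 * 2 ^ M * (δ/L) ^ γ) := by
          rw [Finset.sum_const, Finset.card_univ, Fintype.card_fin, nsmul_eq_mul]
  -- conclude
  have h2M : (0:ℝ) < 2 ^ M := by positivity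
  have hdiv : (δ/L) ^ γ = δ ^ γ / L ^ γ := Real.div_rpow hδ.le hL.le γ
  have hfin : L ^ γ ≤ (N:ℝ) * (2 * δ ^ γ) := by
    rw [hdiv] at hcount
    by_contra hcon
    push_neg at hcon
    have hstep : (N:ℝ) * (2 * 2 ^ M * (δ ^ γ / L ^ γ)) < 2 ^ M := by
      have : (N:ℝ) * (2 * 2 ^ M * (δ ^ γ / L ^ γ))
          = ((N:ℝ) * (2 * δ ^ γ)) * (2 ^ M / L ^ γ) := by ring
      rw [this]
      calc ((N:ℝ) * (2 * δ ^ γ)) * (2 ^ M / L ^ γ) < L ^ γ * (2 ^ M / L ^ γ) := by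
            apply mul_lt_mul_of_pos_right hcon (by positivity)
        _ = 2 ^ M := by field_simp
    linarith
  rw [hδnegγ]
  rw [← sub_nonneg]
  have hNnn : (0:ℝ) ≤ (N:ℝ) := Nat.cast_nonneg N
  have hexp : (N:ℝ) - 1/2 * L ^ γ * (δ ^ γ)⁻¹ =
      ((N:ℝ) * (2 * δ ^ γ) - L ^ γ) * (2 * δ ^ γ)⁻¹ := by
    field_simp
  rw [hexp]
  apply mul_nonneg (by linarith) (by positivity)
end

section
/- For α ∈ (0,1), with J_n = [1 + 2^{-2^n - 1}, 1 + 2^{-2^n}] and n_0 the smallest nonnegative integer with α 2^{n_0} ≥ 1, the following holds for every interval I ⊆ [1,2]: the sum over all n ≥ n_0 with |J_n| ≤ |I| of |J_n|^α is at most 4 |I|^α. -/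
/-- For `α ∈ (0,1)`, with `|J_n| = 2^{-2^n - 1}` and `n₀` the smallest nonnegative integer
such that `α 2^{n₀} ≥ 1`, for every interval `I = [x,y] ⊆ [1,2]` the sum over all `n ≥ n₀`
with `|J_n| ≤ |I|` of `|J_n|^α` is at most `4 |I|^α`. -/
theorem stmt9 (α : ℝ) (h0 : 0 < α) (h1 : α < 1) (n0 : ℕ)
    (hn0 : 1 ≤ α * 2 ^ n0) (hmin : ∀ k : ℕ, k < n0 → α * 2 ^ k < 1)
    (x y : ℝ) (hx : 1 ≤ x) (hy : y ≤ 2) (hxy : x ≤ y) :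
    Summable (fun n : ℕ =>
      Set.indicator {n : ℕ | n0 ≤ n ∧ (2:ℝ) ^ (-((2:ℝ) ^ n) - 1) ≤ y - x}
        (fun n => ((2:ℝ) ^ (-((2:ℝ) ^ n) - 1)) ^ α) n) ∧
    (∑' n : ℕ,
      Set.indicator {n : ℕ | n0 ≤ n ∧ (2:ℝ) ^ (-((2:ℝ) ^ n) - 1) ≤ y - x}
        (fun n => ((2:ℝ) ^ (-((2:ℝ) ^ n) - 1)) ^ α) n) ≤ 4 * (y - x) ^ α := by
  classical
  set t : ℝ := y - x with ht
  have ht0 : 0 ≤ t := by simp [ht]; linarith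
  have hta : 0 ≤ t ^ α := Real.rpow_nonneg ht0 α
  set S : Set ℕ := {n : ℕ | n0 ≤ n ∧ (2:ℝ) ^ (-((2:ℝ) ^ n) - 1) ≤ t} with hSdef
  set g : ℕ → ℝ := Set.indicator S (fun n => ((2:ℝ) ^ (-((2:ℝ) ^ n) - 1)) ^ α) with hg
  by_cases hne : ∃ n, n ∈ S
  · set m : ℕ := Nat.find hne with hmdef
    have hmS : m ∈ S := Nat.find_spec hne
    have hmn0 : n0 ≤ m := hmS.1
    -- S is upward closed from m
    have hup : ∀ n, m ≤ n → n ∈ S := by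
      intro n hn
      refine ⟨le_trans hmn0 hn, le_trans ?_ hmS.2⟩
      apply Real.rpow_le_rpow_of_exponent_le one_le_two
      have : (2:ℝ) ^ m ≤ (2:ℝ) ^ n := pow_le_pow_right₀ one_le_two hn
      linarith
    have hdown : ∀ n, n < m → g n = 0 := by
      intro n hn
      exact Set.indicator_of_notMem (Nat.find_min hne hn) _
    -- key bound on the shifted terms
    have hterm : ∀ k : ℕ, g (k + m) ≤ t ^ α * (1/2 : ℝ) ^ k := by
      intro k
      have hmem : (k + m) ∈ S := hup _ (Nat.le_add_left m k)
      rw [hg, Set.indicator_of_mem hmem]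
      have h2 : (0:ℝ) < 2 := by norm_num
      have hmS2 : (2:ℝ) ^ (-((2:ℝ) ^ (m:ℝ)) - 1) ≤ t := by
        have h := hmS.2
        rwa [← Real.rpow_natCast (2:ℝ) m] at h
      rw [← Real.rpow_natCast (2:ℝ) (k+m), ← Real.rpow_mul (le_of_lt h2)]
      push_cast
      have hfm : ((2:ℝ) ^ (-((2:ℝ) ^ (m:ℝ)) - 1)) ^ α ≤ t ^ α :=
        Real.rpow_le_rpow (Real.rpow_nonneg (le_of_lt h2) _) hmS2 (le_of_lt h0)
      rw [← Real.rpow_mul (le_of_lt h2)] at hfm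
      have hhalf : (1/2 : ℝ) ^ k = (2:ℝ) ^ (-(k:ℝ)) := by
        rw [Real.rpow_neg (le_of_lt h2), Real.rpow_natCast]
        rw [one_div, inv_pow]
      calc (2:ℝ) ^ ((-(2:ℝ) ^ ((k:ℝ)+(m:ℝ)) - 1) * α)
          ≤ (2:ℝ) ^ ((-(2:ℝ) ^ (m:ℝ) - 1) * α + (-(k:ℝ))) := by
            apply Real.rpow_le_rpow_of_exponent_le one_le_two
            have h2m : (2:ℝ) ^ ((k:ℝ)+(m:ℝ)) = (2:ℝ)^(k:ℝ) * (2:ℝ)^(m:ℝ) := by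
              rw [← Real.rpow_add h2]
            have hk2 : (k:ℝ) + 1 ≤ (2:ℝ)^(k:ℝ) := by
              rw [Real.rpow_natCast]
              exact_mod_cast (Nat.lt_two_pow_self (n := k))
            have ham : 1 ≤ α * (2:ℝ)^(m:ℝ) := by
              rw [Real.rpow_natCast]
              calc (1:ℝ) ≤ α * 2 ^ n0 := hn0
              _ ≤ α * 2 ^ m := by
                apply mul_le_mul_of_nonneg_left _ (le_of_lt h0)
                exact pow_le_pow_right₀ one_le_two hmn0
            -- need: (-(2^(k+m)) - 1)*α ≤ (-(2^m)-1)*α - k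
            -- i.e. α*(2^(k+m) - 2^m) ≥ k, i.e. α*2^m*(2^k - 1) ≥ k
            have key : (k:ℝ) ≤ α * ((2:ℝ)^((k:ℝ)+(m:ℝ)) - (2:ℝ)^(m:ℝ)) := by
              rw [h2m]
              have h1k : (k:ℝ) ≤ (2:ℝ)^(k:ℝ) - 1 := by linarith
              have h2k0 : (0:ℝ) ≤ (2:ℝ)^(k:ℝ) - 1 := by
                have : (1:ℝ) ≤ (2:ℝ)^(k:ℝ) := Real.one_le_rpow one_le_two (Nat.cast_nonneg k)
                linarith
              calc (k:ℝ) ≤ (2:ℝ)^(k:ℝ) - 1 := h1k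
              _ = 1 * ((2:ℝ)^(k:ℝ) - 1) := by ring
              _ ≤ (α * (2:ℝ)^(m:ℝ)) * ((2:ℝ)^(k:ℝ) - 1) :=
                mul_le_mul_of_nonneg_right ham h2k0
              _ = α * ((2:ℝ)^(k:ℝ) * (2:ℝ)^(m:ℝ) - (2:ℝ)^(m:ℝ)) := by ring
            nlinarith [key]
      _ = (2:ℝ) ^ ((-(2:ℝ) ^ (m:ℝ) - 1) * α) * (2:ℝ) ^ (-(k:ℝ)) := by
            rw [Real.rpow_add h2]
      _ ≤ t ^ α * (1/2 : ℝ) ^ k := by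
            rw [hhalf]
            apply mul_le_mul_of_nonneg_right hfm (Real.rpow_nonneg (le_of_lt h2) _)
    have hgnn : ∀ n, 0 ≤ g n :=
      fun n => Set.indicator_nonneg (fun i _ => Real.rpow_nonneg (Real.rpow_nonneg (by norm_num) _) _) n
    have hgeo : Summable (fun k : ℕ => t ^ α * (1/2 : ℝ) ^ k) :=
      (summable_geometric_of_lt_one (by norm_num) (by norm_num)).mul_left _
    have hshift : Summable (fun k : ℕ => g (k + m)) :=
      Summable.of_nonneg_of_le (fun k => hgnn _) hterm hgeo
    have hsum : Summable g := (summable_nat_add_iff m).mp hshift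
    refine ⟨hsum, ?_⟩
    have hsplit := Summable.sum_add_tsum_nat_add m hsum
    have hzero : ∑ i ∈ Finset.range m, g i = 0 :=
      Finset.sum_eq_zero (fun i hi => hdown i (Finset.mem_range.mp hi))
    have hgeosum : ∑' k : ℕ, t ^ α * (1/2 : ℝ) ^ k = t ^ α * 2 := by
      rw [tsum_mul_left, tsum_geometric_of_lt_one (by norm_num) (by norm_num)]
      norm_num
    calc ∑' n, g n = ∑ i ∈ Finset.range m, g i + ∑' k, g (k + m) := hsplit.symm
      _ = ∑' k, g (k + m) := by rw [hzero, zero_add]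
      _ ≤ ∑' k : ℕ, t ^ α * (1/2 : ℝ) ^ k := Summable.tsum_le_tsum hterm hshift hgeo
      _ = t ^ α * 2 := hgeosum
      _ ≤ 4 * t ^ α := by linarith
  · have hgz : g = fun _ => 0 := by
      funext n
      exact Set.indicator_of_notMem (fun h => hne ⟨n, h⟩) _
    rw [hgz]
    refine ⟨summable_zero, ?_⟩
    rw [tsum_zero]
    linarith
end

section
/- Let ξ, θ ∈ ℝ² with |θ| = 1 and τ(ρ) = |ξ − ρθ| + ρ. For every integer N ≥ 1 there exist real coefficients a_{0,N}, …, a_{N,N} with Σ_{k=0}^N a_{k,N} = 0 such that, writing v = ξ − ρθ and w = ⟨v,θ⟩/|v|, one has τ^{(N)}(ρ) = |v|^{-(N-1)} Σ_{k=0}^N a_{k,N} w^k whenever v ≠ 0. -/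
open scoped RealInnerProductSpace
open Polynomial

variable (ξ θ : EuclideanSpace ℝ (Fin 2))

lemma inner_aux (hθ : ‖θ‖ = 1) (ρ : ℝ) : ⟪ξ - ρ • θ, θ⟫ = ⟪ξ, θ⟫ - ρ := by
  have h1 : ⟪θ, θ⟫ = (1 : ℝ) := by rw [real_inner_self_eq_norm_sq, hθ]; norm_num
  rw [inner_sub_left, real_inner_smul_left, h1, mul_one]

lemma norm_aux (hθ : ‖θ‖ = 1) (ρ : ℝ) :
    ‖ξ - ρ • θ‖ = Real.sqrt (‖ξ‖ ^ 2 - 2 * ρ * ⟪ξ, θ⟫ + ρ ^ 2) := by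
  have h : ‖ξ - ρ • θ‖ ^ 2 = ‖ξ‖ ^ 2 - 2 * ρ * ⟪ξ, θ⟫ + ρ ^ 2 := by
    rw [norm_sub_sq_real, real_inner_smul_right, norm_smul, hθ]
    rw [mul_pow]; simp; ring
  rw [← h, Real.sqrt_sq (norm_nonneg _)]

lemma hasDerivAt_r (hθ : ‖θ‖ = 1) (ρ : ℝ) (hρ : ξ - ρ • θ ≠ 0) :
    HasDerivAt (fun s : ℝ => ‖ξ - s • θ‖) (-((⟪ξ, θ⟫ - ρ) / ‖ξ - ρ • θ‖)) ρ := by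
  have hr0 : ‖ξ - ρ • θ‖ ≠ 0 := norm_ne_zero_iff.mpr hρ
  have hna := norm_aux ξ θ hθ ρ
  have hq : (‖ξ‖ ^ 2 - 2 * ρ * ⟪ξ, θ⟫ + ρ ^ 2) ≠ 0 := by
    intro h; exact hr0 (by rw [hna, h, Real.sqrt_zero])
  have h1 : HasDerivAt (fun s : ℝ => ‖ξ‖ ^ 2 - 2 * s * ⟪ξ, θ⟫ + s ^ 2)
      (-2 * ⟪ξ, θ⟫ + 2 * ρ) ρ := by
    have h0 := ((hasDerivAt_id ρ).const_mul (2 : ℝ)).mul_const (⟪ξ, θ⟫)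
    have h2 := (hasDerivAt_pow 2 ρ)
    simpa using ((hasDerivAt_const ρ (‖ξ‖^2)).fun_sub h0).fun_add h2
  have h2 := (Real.hasDerivAt_sqrt hq).comp ρ h1
  have heq : (fun s : ℝ => ‖ξ - s • θ‖)
      = fun s => Real.sqrt (‖ξ‖ ^ 2 - 2 * s * ⟪ξ, θ⟫ + s ^ 2) := by
    funext s; exact norm_aux ξ θ hθ s
  rw [heq]
  refine h2.congr_deriv ?_
  rw [← hna]
  field_simp
  ring

lemma key (hθ : ‖θ‖ = 1) : ∀ N : ℕ, 1 ≤ N →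
    ∃ P : Polynomial ℝ, P.natDegree ≤ N ∧ P.eval 1 = 0 ∧
      ∀ ρ : ℝ, ξ - ρ • θ ≠ 0 →
        iteratedDeriv N (fun s : ℝ => ‖ξ - s • θ‖ + s) ρ =
          ‖ξ - ρ • θ‖ ^ (1 - (N : ℤ)) * P.eval ((⟪ξ, θ⟫ - ρ) / ‖ξ - ρ • θ‖) := by
  intro N hN
  induction N, hN using Nat.le_induction with
  | base =>
    refine ⟨1 - X, le_trans (natDegree_sub_le _ _) (by simp), by simp, ?_⟩
    intro ρ hρ
    have hd : HasDerivAt (fun s : ℝ => ‖ξ - s • θ‖ + s)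
        (-((⟪ξ, θ⟫ - ρ) / ‖ξ - ρ • θ‖) + 1) ρ :=
      (hasDerivAt_r ξ θ hθ ρ hρ).add (hasDerivAt_id ρ)
    rw [iteratedDeriv_one, hd.deriv]
    simp; ring
  | succ N hN ih =>
    obtain ⟨P, hdeg, hev, hP⟩ := ih
    refine ⟨C ((N : ℝ) - 1) * (X * P) + (X ^ 2 - 1) * derivative P, ?_, ?_, ?_⟩
    · refine le_trans (natDegree_add_le _ _) (max_le ?_ ?_)
      · refine le_trans (natDegree_mul_le) ?_
        have h1 : (X * P).natDegree ≤ 1 + N :=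
          le_trans natDegree_mul_le (by simp only [Polynomial.natDegree_X]; omega)
        simp only [natDegree_C]; omega
      · refine le_trans (natDegree_mul_le) ?_
        have h1 : (X ^ 2 - 1 : Polynomial ℝ).natDegree ≤ 2 :=
          le_trans (natDegree_sub_le _ _) (by simp)
        have h2 := Polynomial.natDegree_derivative_le P
        omega
    · simp [hev]
    · intro ρ hρ
      have hr0 : ‖ξ - ρ • θ‖ ≠ 0 := norm_ne_zero_iff.mpr hρ
      set c : ℝ := ⟪ξ, θ⟫ with hc
      set t : ℝ := ‖ξ - ρ • θ‖ with ht
      set u : ℝ := (c - ρ) / t with hu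
      have hU : IsOpen {s : ℝ | ξ - s • θ ≠ 0} := by
        have : Continuous fun s : ℝ => ξ - s • θ :=
          continuous_const.sub (continuous_id.smul continuous_const)
        exact isOpen_compl_singleton.preimage this
      have hev2 : iteratedDeriv N (fun s : ℝ => ‖ξ - s • θ‖ + s) =ᶠ[nhds ρ]
          fun s => ‖ξ - s • θ‖ ^ (1 - (N : ℤ)) * P.eval ((c - s) / ‖ξ - s • θ‖) := by
        filter_upwards [hU.mem_nhds hρ] with s hs using hP s hs
      rw [iteratedDeriv_succ, hev2.deriv_eq]
      -- derivative of the norm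
      have hrD : HasDerivAt (fun s : ℝ => ‖ξ - s • θ‖) (-u) ρ := hasDerivAt_r ξ θ hθ ρ hρ
      have hz : HasDerivAt (fun s : ℝ => ‖ξ - s • θ‖ ^ (1 - (N : ℤ)))
          ((((1 : ℤ) - N : ℤ) : ℝ) * t ^ ((1 - (N : ℤ)) - 1) * (-u)) ρ := by
        have := (hasDerivAt_zpow (1 - (N : ℤ)) t (Or.inl hr0)).comp ρ hrD
        simpa [mul_assoc, Function.comp_def] using this
      have hnum : HasDerivAt (fun s : ℝ => c - s) (-1) ρ := by
        simpa using (hasDerivAt_const ρ c).fun_sub (hasDerivAt_id ρ)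
      have hwD : HasDerivAt (fun s : ℝ => (c - s) / ‖ξ - s • θ‖)
          ((-1 * t - (c - ρ) * (-u)) / t ^ 2) ρ := hnum.div hrD hr0
      have hPD : HasDerivAt (fun s : ℝ => P.eval ((c - s) / ‖ξ - s • θ‖))
          ((derivative P).eval u * ((-1 * t - (c - ρ) * (-u)) / t ^ 2)) ρ :=
        by have := (P.hasDerivAt u).comp ρ hwD; exact this
      have hG := hz.fun_mul hPD
      rw [hG.deriv]
      simp only [← ht, ← hu]
      have hcw : c - ρ = u * t := by rw [hu]; field_simp
      have e1 : ((1 : ℤ) - N) - 1 = -(N : ℤ) := by ring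
      have e2 : (1 : ℤ) - ((N : ℕ) + 1 : ℕ) = -(N : ℤ) := by push_cast; ring
      have e3 : (1 : ℤ) - (N : ℤ) = -(N : ℤ) + 1 := by ring
      rw [hcw, e1, e2, e3, zpow_add_one₀ hr0, zpow_neg, zpow_natCast]
      simp only [eval_add, eval_mul, eval_sub, eval_pow, eval_C, eval_X, eval_one]
      have htN : (t : ℝ) ^ N ≠ 0 := pow_ne_zero _ hr0
      push_cast
      field_simp
      ring

/-- For `ξ, θ ∈ ℝ²` with `|θ| = 1` and `τ(ρ) = |ξ − ρθ| + ρ`: for every `N ≥ 1` there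
exist coefficients `a_{0,N}, …, a_{N,N}` summing to zero such that, with `v = ξ − ρθ`
and `w = ⟨v,θ⟩/|v|`, one has `τ^{(N)}(ρ) = |v|^{-(N-1)} Σ_{k=0}^N a_{k,N} w^k`
whenever `v ≠ 0`. -/
theorem stmt13 (ξ θ : EuclideanSpace ℝ (Fin 2)) (hθ : ‖θ‖ = 1) (N : ℕ) (hN : 1 ≤ N) :
    ∃ a : Fin (N + 1) → ℝ, (∑ k, a k = 0) ∧
      ∀ ρ : ℝ, ξ - ρ • θ ≠ 0 →
        iteratedDeriv N (fun s : ℝ => ‖ξ - s • θ‖ + s) ρ =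
          ‖ξ - ρ • θ‖ ^ (1 - (N : ℤ)) *
            ∑ k : Fin (N + 1),
              a k * (⟪ξ - ρ • θ, θ⟫ / ‖ξ - ρ • θ‖) ^ (k : ℕ) := by
  obtain ⟨P, hdeg, hev, hP⟩ := key ξ θ hθ N hN
  have hlt : P.natDegree < N + 1 := Nat.lt_succ_of_le hdeg
  refine ⟨fun k => P.coeff k, ?_, ?_⟩
  · have h1 := Polynomial.eval_eq_sum_range' hlt (1 : ℝ)
    rw [hev] at h1
    rw [Fin.sum_univ_eq_sum_range (fun k => P.coeff k) (N + 1)]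
    simpa using h1.symm
  · intro ρ hρ
    rw [hP ρ hρ, ← inner_aux ξ θ hθ ρ]
    congr 1
    rw [Polynomial.eval_eq_sum_range' hlt]
    exact (Fin.sum_univ_eq_sum_range
      (fun k => P.coeff k * (⟪ξ - ρ • θ, θ⟫ / ‖ξ - ρ • θ‖) ^ k) (N + 1)).symm
end
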